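/- arXiv:2007.02037 — 5 statements merged into one kernel-verified Lean document; each statement's English description precedes it below -/
import Mathlib

section
/- Suppose a nonnegative random variable X satisfies P(X > x) = β x^{-1/γ}{1 + C x^{-δ} + o(x^{-δ})} as x → ∞, with β, γ, δ > 0 and C ∈ ℝ. Then as u → ∞, E[log(X/u) · 1{X > u}] = β γ u^{-1/γ} + (β C / (1/γ + δ)) u^{-1/γ - δ} + o(u^{-1/γ - δ}). -/
open Filter Real Asymptotics MeasureTheory Set
open scoped ENNReal

lemma integral_Ioi_exp_neg_mul {b : ℝ} (hb : 0 < b) :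
    ∫ t in Ioi (0:ℝ), Real.exp (-b * t) = 1 / b := by
  have h := integral_comp_mul_left_Ioi (fun x => Real.exp (-x)) 0 hb
  simp only [mul_zero, integral_exp_neg_Ioi_zero, smul_eq_mul, mul_one] at h
  simpa [neg_mul, one_div] using h

lemma rpow_mul_exp_helper {u t : ℝ} (hu : 0 < u) (a : ℝ) :
    (u * Real.exp t) ^ a = u ^ a * Real.exp (a * t) := by
  rw [Real.mul_rpow hu.le (Real.exp_pos t).le, ← Real.exp_mul, mul_comm t a]

lemma layercake_log_aux {Ω : Type*} [MeasurableSpace Ω] (μ : Measure Ω) [IsProbabilityMeasure μ]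
    (X : Ω → ℝ) (hX : Measurable X) {K M u a : ℝ} (hM : 1 ≤ M) (hu : M ≤ u) (ha : 0 < a)
    (hK : ∀ x, M ≤ x → (μ {ω | x < X ω}).toReal ≤ K * x ^ (-a)) :
    (∫ ω in {ω | u < X ω}, Real.log (X ω / u) ∂μ)
      = ∫ t in Ioi 0, (μ {ω | u * Real.exp t < X ω}).toReal := by
  have hu0 : (0:ℝ) < u := lt_of_lt_of_le zero_lt_one (hM.trans hu)
  set f : Ω → ℝ := Set.indicator {ω | u < X ω} (fun ω => Real.log (X ω / u)) with hf
  have hmset : MeasurableSet {ω | u < X ω} := measurableSet_lt measurable_const hX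
  have hfmeas : Measurable f := ((hX.div_const u).log).indicator hmset
  have hfnn : ∀ ω, 0 ≤ f ω := by
    intro ω
    by_cases hω : u < X ω
    · have hmem : ω ∈ {ω | u < X ω} := hω
      rw [hf, Set.indicator_of_mem hmem]
      exact Real.log_nonneg ((one_le_div hu0).mpr hω.le)
    · have hmem : ω ∉ {ω | u < X ω} := hω
      rw [hf, Set.indicator_of_notMem hmem]
  have hsets : ∀ t : ℝ, 0 < t → {ω | t < f ω} = {ω | u * Real.exp t < X ω} := by
    intro t ht
    ext ω
    simp only [Set.mem_setOf_eq, hf]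
    by_cases hω : u < X ω
    · have hmem : ω ∈ {ω | u < X ω} := hω
      rw [Set.indicator_of_mem hmem]
      rw [Real.lt_log_iff_exp_lt (div_pos (lt_trans hu0 hω) hu0), lt_div_iff₀ hu0, mul_comm]
    · have hmem : ω ∉ {ω | u < X ω} := hω
      rw [Set.indicator_of_notMem hmem]
      constructor
      · intro h; linarith
      · intro h
        exact absurd (lt_of_le_of_lt (le_mul_of_one_le_right hu0.le (Real.one_le_exp ht.le)) h) hω
  have hK0 : 0 ≤ K := by
    have h1 := (ENNReal.toReal_nonneg).trans (hK M le_rfl)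
    nlinarith [Real.rpow_pos_of_pos (lt_of_lt_of_le zero_lt_one hM) (-a)]
  have hbdd_int : IntegrableOn (fun t : ℝ => K * u ^ (-a) * Real.exp (-a * t)) (Ioi 0) :=
    (exp_neg_integrableOn_Ioi 0 ha).const_mul _
  have hlint : ∫⁻ ω, ENNReal.ofReal (f ω) ∂μ < ∞ := by
    rw [lintegral_eq_lintegral_meas_lt μ (Eventually.of_forall hfnn) hfmeas.aemeasurable]
    have hstep : ∫⁻ t in Ioi 0, μ {ω | t < f ω}
        ≤ ∫⁻ t in Ioi (0:ℝ), ENNReal.ofReal (K * u ^ (-a) * Real.exp (-a * t)) := by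
      refine lintegral_mono_ae ((ae_restrict_iff' measurableSet_Ioi).mpr
        (Eventually.of_forall fun t ht => ?_))
      rw [hsets t ht]
      have hx : M ≤ u * Real.exp t :=
        hu.trans (le_mul_of_one_le_right hu0.le (Real.one_le_exp ht.le))
      have hb := hK _ hx
      rw [rpow_mul_exp_helper hu0 (-a)] at hb
      have hnn : 0 ≤ K * u ^ (-a) * Real.exp (-a * t) := by positivity
      refine (ENNReal.le_ofReal_iff_toReal_le (measure_ne_top μ _) hnn).mpr ?_
      calc (μ {ω | u * Real.exp t < X ω}).toReal ≤ K * (u ^ (-a) * Real.exp (-a * t)) := hb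
        _ = K * u ^ (-a) * Real.exp (-a * t) := by ring
    exact lt_of_le_of_lt hstep hbdd_int.lintegral_lt_top
  have hfint : Integrable f μ :=
    ⟨hfmeas.aestronglyMeasurable, (hasFiniteIntegral_iff_ofReal (Eventually.of_forall hfnn)).mpr hlint⟩
  calc ∫ ω in {ω | u < X ω}, Real.log (X ω / u) ∂μ
      = ∫ ω, f ω ∂μ := (integral_indicator hmset).symm
    _ = ∫ t in Ioi 0, (μ {ω | t < f ω}).toReal :=
        hfint.integral_eq_integral_meas_lt (Eventually.of_forall hfnn)
    _ = ∫ t in Ioi 0, (μ {ω | u * Real.exp t < X ω}).toReal :=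
        setIntegral_congr_fun measurableSet_Ioi fun t ht => by rw [hsets t ht]

/-- If a nonnegative random variable `X` satisfies
`P(X > x) = β x^{-1/γ}(1 + C x^{-δ} + o(x^{-δ}))` as `x → ∞` with `β, γ, δ > 0`,
then as `u → ∞`,
`E[log(X/u) 1{X > u}] = βγ u^{-1/γ} + (βC/(1/γ+δ)) u^{-1/γ-δ} + o(u^{-1/γ-δ})`. -/
theorem log_excess_expectation_expansion
    {Ω : Type*} [MeasurableSpace Ω] (μ : Measure Ω) [IsProbabilityMeasure μ]
    (X : Ω → ℝ) (hX : Measurable X) (hXpos : ∀ ω, 0 ≤ X ω)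
    (β γ δ C : ℝ) (hβ : 0 < β) (hγ : 0 < γ) (hδ : 0 < δ)
    (hS : (fun x : ℝ => (μ {ω | x < X ω}).toReal - β * x ^ (-(1 / γ)) * (1 + C * x ^ (-δ)))
      =o[atTop] (fun x : ℝ => x ^ (-(1 / γ) - δ))) :
    (fun u : ℝ => (∫ ω in {ω | u < X ω}, Real.log (X ω / u) ∂μ) -
        (β * γ * u ^ (-(1 / γ)) + β * C / (1 / γ + δ) * u ^ (-(1 / γ) - δ)))
      =o[atTop] (fun u : ℝ => u ^ (-(1 / γ) - δ)) := by
  have hγ0 : (0:ℝ) < 1/γ := by positivity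
  have hq0 : (0:ℝ) < 1/γ + δ := by positivity
  have hexpand : ∀ x : ℝ, 0 < x →
      β * x ^ (-(1/γ)) * (1 + C * x ^ (-δ))
        = β * x ^ (-(1/γ)) + β * C * x ^ (-(1/γ) - δ) := by
    intro x hx
    rw [sub_eq_add_neg, Real.rpow_add hx]
    ring
  obtain ⟨M0, hM0⟩ := eventually_atTop.mp (isLittleO_iff.mp hS one_pos)
  have hM1_1 : (1:ℝ) ≤ max M0 1 := le_max_right _ _
  have hFle : ∀ x, max M0 1 ≤ x →
      (μ {ω | x < X ω}).toReal ≤ (β + |β * C| + 1) * x ^ (-(1/γ)) := by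
    intro x hx
    have hx1 : (1:ℝ) ≤ x := le_trans hM1_1 hx
    have hx0 : (0:ℝ) < x := lt_of_lt_of_le zero_lt_one hx1
    have h := hM0 x (le_trans (le_max_left _ _) hx)
    rw [hexpand x hx0, Real.norm_eq_abs, Real.norm_eq_abs,
      abs_of_pos (Real.rpow_pos_of_pos hx0 _), one_mul] at h
    have habs := (abs_le.mp h).2
    have h1 : x ^ (-(1/γ)-δ) ≤ x ^ (-(1/γ)) :=
      Real.rpow_le_rpow_of_exponent_le hx1 (by linarith)
    have h2 : β * C * x ^ (-(1/γ)-δ) ≤ |β * C| * x ^ (-(1/γ)-δ) :=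
      mul_le_mul_of_nonneg_right (le_abs_self _) (Real.rpow_nonneg hx0.le _)
    have h3 : |β * C| * x ^ (-(1/γ)-δ) ≤ |β * C| * x ^ (-(1/γ)) :=
      mul_le_mul_of_nonneg_left h1 (abs_nonneg _)
    linarith
  rw [isLittleO_iff]
  intro c hc
  obtain ⟨M2, hM2⟩ := eventually_atTop.mp (isLittleO_iff.mp hS (mul_pos hc hq0))
  filter_upwards [eventually_ge_atTop (max (max M0 1) M2)] with u hu
  have huM1 : max M0 1 ≤ u := le_trans (le_max_left _ _) hu
  have hu1 : (1:ℝ) ≤ u := le_trans hM1_1 huM1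
  have hu0 : (0:ℝ) < u := lt_of_lt_of_le zero_lt_one hu1
  have hkey := layercake_log_aux μ X hX hM1_1 huM1 hγ0 hFle
  -- measurability of the tail function
  have hFanti : Antitone (fun x : ℝ => (μ {ω | x < X ω}).toReal) := by
    intro x y hxy
    exact ENNReal.toReal_mono (measure_ne_top μ _)
      (measure_mono (fun ω hω => lt_of_le_of_lt hxy hω))
  have hg0meas : AEStronglyMeasurable (fun t : ℝ => (μ {ω | u * Real.exp t < X ω}).toReal)
      (volume.restrict (Ioi 0)) :=
    (hFanti.measurable.comp (measurable_exp.const_mul u)).aestronglyMeasurable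
  have hbd : IntegrableOn
      (fun t : ℝ => (β + |β * C| + 1) * u ^ (-(1/γ)) * Real.exp (-(1/γ) * t)) (Ioi 0) :=
    (exp_neg_integrableOn_Ioi 0 hγ0).const_mul _
  have hg0 : IntegrableOn (fun t : ℝ => (μ {ω | u * Real.exp t < X ω}).toReal) (Ioi 0) := by
    refine Integrable.mono' hbd hg0meas ?_
    refine (ae_restrict_iff' measurableSet_Ioi).mpr (Eventually.of_forall fun t ht => ?_)
    have hx : max M0 1 ≤ u * Real.exp t :=
      huM1.trans (le_mul_of_one_le_right hu0.le (Real.one_le_exp (le_of_lt ht)))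
    have hb := hFle _ hx
    rw [rpow_mul_exp_helper hu0 (-(1/γ))] at hb
    rw [Real.norm_eq_abs, abs_of_nonneg ENNReal.toReal_nonneg]
    calc (μ {ω | u * Real.exp t < X ω}).toReal
        ≤ (β + |β * C| + 1) * (u ^ (-(1/γ)) * Real.exp (-(1/γ) * t)) := hb
      _ = (β + |β * C| + 1) * u ^ (-(1/γ)) * Real.exp (-(1/γ) * t) := by ring
  have hg1 : IntegrableOn (fun t : ℝ => β * u ^ (-(1/γ)) * Real.exp (-(1/γ) * t)) (Ioi 0) :=
    (exp_neg_integrableOn_Ioi 0 hγ0).const_mul _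
  have hg2 : IntegrableOn
      (fun t : ℝ => β * C * u ^ (-(1/γ)-δ) * Real.exp (-(1/γ+δ) * t)) (Ioi 0) :=
    (exp_neg_integrableOn_Ioi 0 hq0).const_mul _
  have hint1 : ∫ t in Ioi 0, β * u ^ (-(1/γ)) * Real.exp (-(1/γ) * t)
      = β * γ * u ^ (-(1/γ)) := by
    rw [MeasureTheory.integral_const_mul, integral_Ioi_exp_neg_mul hγ0, one_div_one_div]
    ring
  have hint2 : ∫ t in Ioi 0, β * C * u ^ (-(1/γ)-δ) * Real.exp (-(1/γ+δ) * t)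
      = β * C / (1/γ+δ) * u ^ (-(1/γ)-δ) := by
    rw [MeasureTheory.integral_const_mul, integral_Ioi_exp_neg_mul hq0]
    ring
  have hsplit : (∫ t in Ioi 0, (μ {ω | u * Real.exp t < X ω}).toReal) -
      (β * γ * u ^ (-(1/γ)) + β * C / (1/γ+δ) * u ^ (-(1/γ)-δ))
      = ∫ t in Ioi 0, ((μ {ω | u * Real.exp t < X ω}).toReal
          - β * u ^ (-(1/γ)) * Real.exp (-(1/γ) * t)
          - β * C * u ^ (-(1/γ)-δ) * Real.exp (-(1/γ+δ) * t)) := by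
    have h123 : (∫ t in Ioi 0, ((μ {ω | u * Real.exp t < X ω}).toReal
          - β * u ^ (-(1/γ)) * Real.exp (-(1/γ) * t)
          - β * C * u ^ (-(1/γ)-δ) * Real.exp (-(1/γ+δ) * t)))
        = (∫ t in Ioi 0, ((μ {ω | u * Real.exp t < X ω}).toReal
          - β * u ^ (-(1/γ)) * Real.exp (-(1/γ) * t)))
          - ∫ t in Ioi 0, β * C * u ^ (-(1/γ)-δ) * Real.exp (-(1/γ+δ) * t) :=
      integral_sub (hg0.sub hg1) hg2
    have h12 : (∫ t in Ioi 0, ((μ {ω | u * Real.exp t < X ω}).toReal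
          - β * u ^ (-(1/γ)) * Real.exp (-(1/γ) * t)))
        = (∫ t in Ioi 0, (μ {ω | u * Real.exp t < X ω}).toReal)
          - ∫ t in Ioi 0, β * u ^ (-(1/γ)) * Real.exp (-(1/γ) * t) :=
      integral_sub hg0 hg1
    rw [h123, h12, hint1, hint2]
    ring
  have hb_int : IntegrableOn
      (fun t : ℝ => c * (1/γ+δ) * u ^ (-(1/γ)-δ) * Real.exp (-(1/γ+δ) * t)) (Ioi 0) :=
    (exp_neg_integrableOn_Ioi 0 hq0).const_mul _
  have hptwise : ∀ᵐ t ∂(volume.restrict (Ioi (0:ℝ))),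
      ‖(μ {ω | u * Real.exp t < X ω}).toReal
          - β * u ^ (-(1/γ)) * Real.exp (-(1/γ) * t)
          - β * C * u ^ (-(1/γ)-δ) * Real.exp (-(1/γ+δ) * t)‖
        ≤ c * (1/γ+δ) * u ^ (-(1/γ)-δ) * Real.exp (-(1/γ+δ) * t) := by
    refine (ae_restrict_iff' measurableSet_Ioi).mpr (Eventually.of_forall fun t ht => ?_)
    have hx0 : (0:ℝ) < u * Real.exp t := mul_pos hu0 (Real.exp_pos t)
    have hxM2 : M2 ≤ u * Real.exp t :=
      le_trans (le_trans (le_max_right (max M0 1) M2) hu)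
        (le_mul_of_one_le_right hu0.le (Real.one_le_exp (le_of_lt ht)))
    have h := hM2 _ hxM2
    rw [hexpand _ hx0, Real.norm_eq_abs, Real.norm_eq_abs,
      abs_of_pos (Real.rpow_pos_of_pos hx0 _)] at h
    have e1 : (u * Real.exp t) ^ (-(1/γ)) = u ^ (-(1/γ)) * Real.exp (-(1/γ) * t) :=
      rpow_mul_exp_helper hu0 _
    have e2 : (u * Real.exp t) ^ (-(1/γ)-δ) = u ^ (-(1/γ)-δ) * Real.exp (-(1/γ+δ) * t) := by
      rw [rpow_mul_exp_helper hu0 (-(1/γ)-δ), show (-(1/γ)-δ) * t = -(1/γ+δ) * t by ring]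
    rw [e1, e2] at h
    rw [Real.norm_eq_abs]
    calc |(μ {ω | u * Real.exp t < X ω}).toReal
          - β * u ^ (-(1/γ)) * Real.exp (-(1/γ) * t)
          - β * C * u ^ (-(1/γ)-δ) * Real.exp (-(1/γ+δ) * t)|
        = |(μ {ω | u * Real.exp t < X ω}).toReal
          - (β * (u ^ (-(1/γ)) * Real.exp (-(1/γ) * t))
            + β * C * (u ^ (-(1/γ)-δ) * Real.exp (-(1/γ+δ) * t)))| := by ring_nf
      _ ≤ c * (1/γ+δ) * (u ^ (-(1/γ)-δ) * Real.exp (-(1/γ+δ) * t)) := h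
      _ = c * (1/γ+δ) * u ^ (-(1/γ)-δ) * Real.exp (-(1/γ+δ) * t) := by ring
  have hbint_val : ∫ t in Ioi 0, c * (1/γ+δ) * u ^ (-(1/γ)-δ) * Real.exp (-(1/γ+δ) * t)
      = c * u ^ (-(1/γ)-δ) := by
    rw [MeasureTheory.integral_const_mul, integral_Ioi_exp_neg_mul hq0]
    field_simp
  have hnorm := norm_integral_le_of_norm_le hb_int hptwise
  rw [hbint_val] at hnorm
  rw [hkey, hsplit, Real.norm_eq_abs (u ^ (-(1/γ)-δ)),
    abs_of_pos (Real.rpow_pos_of_pos hu0 _)]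
  exact hnorm
end

section
/- Suppose a nonnegative random variable X satisfies P(X > x) = β x^{-1/γ}{1 + C x^{-δ} + o(x^{-δ})} as x → ∞, with β, γ, δ > 0 and C ∈ ℝ. Then as u → ∞, E[(log(X/u))² · 1{X > u}] = 2 β γ² u^{-1/γ} + 2 (β C / (1/γ + δ)²) u^{-1/γ - δ} + o(u^{-1/γ - δ}). -/
open Filter Real Asymptotics MeasureTheory

open Set in
lemma aux_int_exp_sqrt {c : ℝ} (hc : 0 < c) :
    IntegrableOn (fun t => Real.exp (-(c * Real.sqrt t))) (Set.Ioi 0) := by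
  have hcont : Continuous fun t : ℝ => Real.exp (-(c * Real.sqrt t)) :=
    Real.continuous_exp.comp ((continuous_const.mul Real.continuous_sqrt).neg)
  have h1 : IntegrableOn (fun t => Real.exp (-(c * Real.sqrt t))) (Set.Ioc 0 1) := by
    apply Integrable.mono' (integrableOn_const (C := (1:ℝ)) measure_Ioc_lt_top.ne)
      hcont.aestronglyMeasurable.restrict
    filter_upwards with t
    rw [Real.norm_eq_abs, abs_of_pos (Real.exp_pos _)]
    exact Real.exp_le_one_iff.2 (neg_nonpos.2 (mul_nonneg hc.le (Real.sqrt_nonneg t)))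
  have h2 : IntegrableOn (fun t => Real.exp (-(c * Real.sqrt t))) (Set.Ioi 1) := by
    apply Integrable.mono'
      ((integrableOn_Ioi_rpow_of_lt (show (-2:ℝ) < -1 by norm_num) one_pos).const_mul
        (256 / c ^ 4))
      hcont.aestronglyMeasurable.restrict
    rw [ae_restrict_iff' measurableSet_Ioi]
    filter_upwards with t ht
    rw [Set.mem_Ioi] at ht
    have ht0 : (0:ℝ) < t := lt_trans one_pos ht
    rw [Real.norm_eq_abs, abs_of_pos (Real.exp_pos _)]
    have hx0 : 0 ≤ c * Real.sqrt t := mul_nonneg hc.le (Real.sqrt_nonneg t)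
    have key : c ^ 4 * t ^ 2 / 256 ≤ Real.exp (c * Real.sqrt t) := by
      have h4 : (c * Real.sqrt t / 4) ^ 4 ≤ Real.exp (c * Real.sqrt t) := by
        have hle : c * Real.sqrt t / 4 ≤ Real.exp (c * Real.sqrt t / 4) := by
          have := Real.add_one_le_exp (c * Real.sqrt t / 4); linarith
        calc (c * Real.sqrt t / 4) ^ 4 ≤ (Real.exp (c * Real.sqrt t / 4)) ^ 4 :=
              pow_le_pow_left₀ (by positivity) hle 4
          _ = Real.exp (4 * (c * Real.sqrt t / 4)) := by
              rw [← Real.exp_nat_mul]; norm_num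
          _ = Real.exp (c * Real.sqrt t) := by ring_nf
      have hst : Real.sqrt t ^ 2 = t := Real.sq_sqrt ht0.le
      have : (c * Real.sqrt t / 4) ^ 4 = c ^ 4 * t ^ 2 / 256 := by
        have : (c * Real.sqrt t / 4) ^ 4 = c ^ 4 * (Real.sqrt t ^ 2) ^ 2 / 256 := by ring
        rw [this, hst]
      linarith [h4, this.symm.le]
    have ht2 : t ^ (-2:ℝ) = (t ^ 2)⁻¹ := by
      rw [Real.rpow_neg ht0.le, show ((2:ℝ)) = ((2:ℕ):ℝ) by norm_num, Real.rpow_natCast]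
    rw [ht2, Real.exp_neg]
    have hpos : (0:ℝ) < c ^ 4 * t ^ 2 / 256 := by positivity
    calc (Real.exp (c * Real.sqrt t))⁻¹ ≤ (c ^ 4 * t ^ 2 / 256)⁻¹ := inv_anti₀ hpos key
      _ = 256 / c ^ 4 * (t ^ 2)⁻¹ := by field_simp
  rw [show Set.Ioi (0:ℝ) = Set.Ioc 0 1 ∪ Set.Ioi 1 from (Set.Ioc_union_Ioi_eq_Ioi zero_le_one).symm]
  exact h1.union h2

lemma aux_int_mul_exp {r : ℝ} (hr : 0 < r) :
    IntegrableOn (fun s => s * Real.exp (-(r * s))) (Set.Ioi 0) := by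
  have hcont : Continuous fun s : ℝ => s * Real.exp (-(r * s)) := by continuity
  apply Integrable.mono' ((exp_neg_integrableOn_Ioi 0 (half_pos hr)).const_mul (2 / r))
    hcont.aestronglyMeasurable.restrict
  rw [ae_restrict_iff' measurableSet_Ioi]
  filter_upwards with s hs
  rw [Set.mem_Ioi] at hs
  rw [Real.norm_eq_abs, abs_of_nonneg (mul_nonneg hs.le (Real.exp_pos _).le)]
  have h1 : s ≤ 2 / r * Real.exp (r / 2 * s) := by
    have h2 := Real.add_one_le_exp (r / 2 * s)
    have h3 : r / 2 * s ≤ Real.exp (r / 2 * s) := by linarith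
    calc s = 2 / r * (r / 2 * s) := by field_simp
      _ ≤ 2 / r * Real.exp (r / 2 * s) := mul_le_mul_of_nonneg_left h3 (by positivity)
  calc s * Real.exp (-(r * s)) ≤ (2 / r * Real.exp (r / 2 * s)) * Real.exp (-(r * s)) :=
        mul_le_mul_of_nonneg_right h1 (Real.exp_pos _).le
    _ = 2 / r * Real.exp (-(r / 2) * s) := by
        rw [mul_assoc, ← Real.exp_add]
        have : r / 2 * s + -(r * s) = -(r / 2) * s := by ring
        rw [this]

lemma aux_integral_mul_exp {r : ℝ} (hr : 0 < r) :
    ∫ s in Set.Ioi (0:ℝ), s * Real.exp (-(r * s)) = 1 / r ^ 2 := by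
  have h := Real.integral_rpow_mul_exp_neg_mul_Ioi (show (0:ℝ) < 2 by norm_num) hr
  rw [show (2:ℝ) - 1 = 1 by norm_num] at h
  simp only [Real.rpow_one] at h
  rw [h, Real.Gamma_two, mul_one, show ((2:ℝ)) = ((2:ℕ):ℝ) by norm_num, Real.rpow_natCast]
  rw [one_div, inv_pow, one_div]

lemma aux_rpow_split {u : ℝ} (hu : 0 < u) (e s : ℝ) :
    (u * Real.exp s) ^ (-e) = u ^ (-e) * Real.exp (-(e * s)) := by
  rw [Real.mul_rpow hu.le (Real.exp_pos s).le, Real.rpow_def_of_pos (Real.exp_pos s),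
    Real.log_exp, show s * -e = -(e * s) by ring]

/-- If a nonnegative random variable `X` satisfies
`P(X > x) = β x^{-1/γ}(1 + C x^{-δ} + o(x^{-δ}))` as `x → ∞` with `β, γ, δ > 0`,
then as `u → ∞`,
`E[(log(X/u))² 1{X > u}] = 2βγ² u^{-1/γ} + 2(βC/(1/γ+δ)²) u^{-1/γ-δ} + o(u^{-1/γ-δ})`. -/
theorem log_sq_excess_expectation_expansion
    {Ω : Type*} [MeasurableSpace Ω] (μ : Measure Ω) [IsProbabilityMeasure μ]
    (X : Ω → ℝ) (hX : Measurable X) (hXpos : ∀ ω, 0 ≤ X ω)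
    (β γ δ C : ℝ) (hβ : 0 < β) (hγ : 0 < γ) (hδ : 0 < δ)
    (hS : (fun x : ℝ => (μ {ω | x < X ω}).toReal - β * x ^ (-(1 / γ)) * (1 + C * x ^ (-δ)))
      =o[atTop] (fun x : ℝ => x ^ (-(1 / γ) - δ))) :
    (fun u : ℝ => (∫ ω in {ω | u < X ω}, (Real.log (X ω / u)) ^ 2 ∂μ) -
        (2 * β * γ ^ 2 * u ^ (-(1 / γ)) + 2 * (β * C / (1 / γ + δ) ^ 2) * u ^ (-(1 / γ) - δ)))
      =o[atTop] (fun u : ℝ => u ^ (-(1 / γ) - δ)) := by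
  set F : ℝ → ℝ := fun x => (μ {ω | x < X ω}).toReal with hFdef
  have hF_nonneg : ∀ x, 0 ≤ F x := fun x => ENNReal.toReal_nonneg
  have hF_anti : Antitone F := by
    intro x y hxy
    exact ENNReal.toReal_mono (measure_ne_top μ _)
      (measure_mono (fun ω hω => lt_of_le_of_lt hxy hω))
  have hF_meas : Measurable F := hF_anti.measurable
  have ha : (0:ℝ) < 1/γ := by positivity
  have hb : (0:ℝ) < 1/γ + δ := by positivity
  -- tail bound
  obtain ⟨M₀, hM₀⟩ := eventually_atTop.mp (isLittleO_iff.mp hS one_pos)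
  set D : ℝ := β * (1 + |C|) + 1 with hDdef
  have hD0 : 0 < D := by positivity
  set M : ℝ := max M₀ 1 with hMdef
  have hM1 : (1:ℝ) ≤ M := le_max_right _ _
  have hDbound : ∀ x, M ≤ x → F x ≤ D * x ^ (-(1/γ)) := by
    intro x hx
    have hx1 : (1:ℝ) ≤ x := le_trans hM1 hx
    have hx0 : (0:ℝ) < x := lt_of_lt_of_le one_pos hx1
    have h1 := hM₀ x (le_trans (le_max_left _ _) hx)
    rw [one_mul, Real.norm_eq_abs, Real.norm_eq_abs,
      abs_of_nonneg (Real.rpow_nonneg hx0.le _)] at h1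
    have hsplit : x ^ (-(1/γ) - δ) = x ^ (-(1/γ)) * x ^ (-δ) := by
      rw [← Real.rpow_add hx0]; ring_nf
    rw [hsplit] at h1
    have h2 : x ^ (-δ) ≤ 1 := Real.rpow_le_one_of_one_le_of_nonpos hx1 (by linarith)
    have h3 : 0 ≤ x ^ (-δ) := Real.rpow_nonneg hx0.le _
    have h4 : 0 < x ^ (-(1/γ)) := Real.rpow_pos_of_pos hx0 _
    have h5 : C ≤ |C| := le_abs_self C
    have h6 : -|C| ≤ C := neg_abs_le C
    have h7 := (abs_le.mp h1).2
    rw [hDdef]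
    nlinarith [mul_le_mul_of_nonneg_left h2 h4.le,
      mul_le_mul_of_nonneg_left h5 (mul_nonneg hβ.le h3),
      mul_le_mul_of_nonneg_left h2 (mul_nonneg hβ.le (abs_nonneg C))]
  have hrepr : ∀ u, M ≤ u → (∫ ω in {ω | u < X ω}, (Real.log (X ω / u)) ^ 2 ∂μ)
      = ∫ s in Set.Ioi (0:ℝ), 2 * s * F (u * Real.exp s) := by
    intro u huM
    have hu1 : (1:ℝ) ≤ u := le_trans hM1 huM
    have hu0 : (0:ℝ) < u := lt_of_lt_of_le one_pos hu1
    have hSmeas : MeasurableSet {ω | u < X ω} := measurableSet_lt measurable_const hX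
    have hgmeas : Measurable fun ω => (Real.log (X ω / u)) ^ 2 :=
      (Real.measurable_log.comp (hX.div_const u)).pow_const 2
    have hset : ∀ t : ℝ, 0 < t →
        {ω | t < Set.indicator {ω | u < X ω} (fun ω => (Real.log (X ω / u)) ^ 2) ω}
          = {ω | u * Real.exp (Real.sqrt t) < X ω} := by
      intro t ht
      ext ω
      simp only [Set.mem_setOf_eq]
      constructor
      · intro h
        by_cases hω : ω ∈ {ω | u < X ω}
        · rw [Set.indicator_of_mem hω] at h
          have hωlt : u < X ω := hω
          have hdiv : 1 < X ω / u := (one_lt_div hu0).2 hωlt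
          have hlog : 0 ≤ Real.log (X ω / u) := Real.log_nonneg hdiv.le
          have hst : Real.sqrt t < Real.log (X ω / u) := by
            have h' := Real.sqrt_lt_sqrt ht.le h
            rwa [Real.sqrt_sq hlog] at h'
          have h'' := (Real.lt_log_iff_exp_lt (div_pos (lt_trans hu0 hωlt) hu0)).mp hst
          rw [lt_div_iff₀ hu0] at h''
          linarith
        · rw [Set.indicator_of_notMem hω] at h; linarith
      · intro h
        have hexp1 : 1 ≤ Real.exp (Real.sqrt t) := Real.one_le_exp (Real.sqrt_nonneg t)
        have hω : ω ∈ {ω | u < X ω} := by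
          have : u ≤ u * Real.exp (Real.sqrt t) := le_mul_of_one_le_right hu0.le hexp1
          exact lt_of_le_of_lt this h
        rw [Set.indicator_of_mem hω]
        have hdiv : Real.exp (Real.sqrt t) < X ω / u := (lt_div_iff₀ hu0).2 (by linarith)
        have hω' : u < X ω := hω
        have hlog : Real.sqrt t < Real.log (X ω / u) :=
          (Real.lt_log_iff_exp_lt (div_pos (lt_trans hu0 hω') hu0)).mpr hdiv
        nlinarith [Real.sqrt_nonneg t, Real.sq_sqrt ht.le]
    have hind : ∀ ω, ENNReal.ofReal
          (Set.indicator {ω | u < X ω} (fun ω => (Real.log (X ω / u)) ^ 2) ω)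
        = Set.indicator {ω | u < X ω}
            (fun ω => ENNReal.ofReal ((Real.log (X ω / u)) ^ 2)) ω := by
      intro ω; by_cases hω : ω ∈ {ω | u < X ω} <;> simp [hω]
    have layer := lintegral_eq_lintegral_meas_lt μ
      (ae_of_all μ (fun ω => Set.indicator_nonneg (fun ω _ => sq_nonneg _) ω))
      ((hgmeas.indicator hSmeas).aemeasurable)
    have step1 : (∫ ω in {ω | u < X ω}, (Real.log (X ω / u)) ^ 2 ∂μ)
        = (∫⁻ t in Set.Ioi 0, ENNReal.ofReal (F (u * Real.exp (Real.sqrt t)))).toReal := by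
      rw [integral_eq_lintegral_of_nonneg_ae (ae_of_all _ fun ω => sq_nonneg _)
        hgmeas.aestronglyMeasurable.restrict]
      congr 1
      rw [← lintegral_indicator hSmeas]
      calc ∫⁻ ω, Set.indicator {ω | u < X ω}
              (fun ω => ENNReal.ofReal ((Real.log (X ω / u)) ^ 2)) ω ∂μ
          = ∫⁻ ω, ENNReal.ofReal
              (Set.indicator {ω | u < X ω} (fun ω => (Real.log (X ω / u)) ^ 2) ω) ∂μ := by
            exact lintegral_congr fun ω => (hind ω).symm
        _ = ∫⁻ t in Set.Ioi 0,
              μ {ω | t < Set.indicator {ω | u < X ω}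
                (fun ω => (Real.log (X ω / u)) ^ 2) ω} := layer
        _ = ∫⁻ t in Set.Ioi 0, ENNReal.ofReal (F (u * Real.exp (Real.sqrt t))) := by
            apply setLIntegral_congr_fun measurableSet_Ioi
            intro t ht
            dsimp only
            rw [hset t ht]
            exact (ENNReal.ofReal_toReal (measure_ne_top μ _)).symm
    have hmeasF : Measurable fun t : ℝ => F (u * Real.exp (Real.sqrt t)) :=
      hF_meas.comp (measurable_const.mul
        ((Real.continuous_exp.comp Real.continuous_sqrt).measurable))
    have step4 : ∫ t in Set.Ioi (0:ℝ), F (u * Real.exp (Real.sqrt t))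
        = (∫⁻ t in Set.Ioi 0, ENNReal.ofReal (F (u * Real.exp (Real.sqrt t)))).toReal :=
      integral_eq_lintegral_of_nonneg_ae (ae_of_all _ fun t => hF_nonneg _)
        hmeasF.aestronglyMeasurable.restrict
    have hsub := MeasureTheory.integral_comp_rpow_Ioi
      (fun y => F (u * Real.exp (Real.sqrt y))) (p := 2) two_ne_zero
    have heqn : Set.EqOn
        (fun x : ℝ => (|(2:ℝ)| * x ^ ((2:ℝ)-1)) • F (u * Real.exp (Real.sqrt (x ^ (2:ℝ)))))
        (fun x : ℝ => 2 * x * F (u * Real.exp x)) (Set.Ioi 0) := by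
      intro x hx
      rw [Set.mem_Ioi] at hx
      have h1 : Real.sqrt (x ^ (2:ℝ)) = x := by
        rw [show ((2:ℝ)) = ((2:ℕ):ℝ) by norm_num, Real.rpow_natCast, Real.sqrt_sq hx.le]
      simp only [h1, smul_eq_mul, show ((2:ℝ)) - 1 = 1 by norm_num, Real.rpow_one, abs_two]
    rw [setIntegral_congr_fun measurableSet_Ioi heqn] at hsub
    rw [step1, ← step4, ← hsub]
  have hint : ∀ u, M ≤ u →
      IntegrableOn (fun s => 2 * s * F (u * Real.exp s)) (Set.Ioi 0) := by
    intro u huM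
    have hu1 : (1:ℝ) ≤ u := le_trans hM1 huM
    have hu0 : (0:ℝ) < u := lt_of_lt_of_le one_pos hu1
    have hmeas : Measurable fun s : ℝ => 2 * s * F (u * Real.exp s) :=
      (measurable_const.mul measurable_id).mul
        (hF_meas.comp (measurable_const.mul Real.continuous_exp.measurable))
    apply Integrable.mono' ((aux_int_mul_exp ha).const_mul (2 * D))
      hmeas.aestronglyMeasurable.restrict
    rw [ae_restrict_iff' measurableSet_Ioi]
    filter_upwards with s hs
    rw [Set.mem_Ioi] at hs
    have hMx : M ≤ u * Real.exp s :=
      le_trans huM (le_mul_of_one_le_right hu0.le (Real.one_le_exp hs.le))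
    have h1 : F (u * Real.exp s) ≤ D * (u * Real.exp s) ^ (-(1/γ)) := hDbound _ hMx
    have h2 : (u * Real.exp s) ^ (-(1/γ)) = u ^ (-(1/γ)) * Real.exp (-((1/γ) * s)) :=
      aux_rpow_split hu0 _ s
    have h3 : u ^ (-(1/γ)) ≤ 1 := Real.rpow_le_one_of_one_le_of_nonpos hu1 (by linarith)
    have h4 : 0 < u ^ (-(1/γ)) := Real.rpow_pos_of_pos hu0 _
    have h5 : 0 < Real.exp (-((1/γ) * s)) := Real.exp_pos _
    rw [Real.norm_eq_abs, abs_of_nonneg (by positivity)]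
    have h6 : F (u * Real.exp s) ≤ D * Real.exp (-((1/γ) * s)) := by
      rw [h2] at h1
      nlinarith [mul_le_mul_of_nonneg_left (mul_le_mul_of_nonneg_right h3 h5.le) hD0.le]
    nlinarith
  -- main estimate
  rw [isLittleO_iff]
  intro ε hε
  have hc : (0:ℝ) < ε * (1/γ + δ)^2 / 2 := by positivity
  obtain ⟨M', hM'⟩ := eventually_atTop.mp (isLittleO_iff.mp hS hc)
  filter_upwards [eventually_ge_atTop (max M M')] with u hu
  have huM : M ≤ u := le_trans (le_max_left _ _) hu
  have huM' : M' ≤ u := le_trans (le_max_right _ _) hu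
  have hu1 : (1:ℝ) ≤ u := le_trans hM1 huM
  have hu0 : (0:ℝ) < u := lt_of_lt_of_le one_pos hu1
  have hEq : Set.EqOn (fun s => 2 * s * F (u * Real.exp s))
      (fun s => (2 * β * u ^ (-(1/γ))) * (s * Real.exp (-((1/γ) * s)))
        + (2 * β * C * u ^ (-(1/γ) - δ)) * (s * Real.exp (-((1/γ + δ) * s)))
        + 2 * s * (F (u * Real.exp s)
            - β * (u * Real.exp s) ^ (-(1/γ)) * (1 + C * (u * Real.exp s) ^ (-δ))))
      (Set.Ioi 0) := by
    intro s hs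
    have h1 : (u * Real.exp s) ^ (-(1/γ)) = u ^ (-(1/γ)) * Real.exp (-((1/γ) * s)) :=
      aux_rpow_split hu0 _ s
    have h2 : (u * Real.exp s) ^ (-δ) = u ^ (-δ) * Real.exp (-(δ * s)) :=
      aux_rpow_split hu0 _ s
    have h3 : u ^ (-(1/γ) - δ) = u ^ (-(1/γ)) * u ^ (-δ) := by
      rw [← Real.rpow_add hu0]; ring_nf
    have h4 : Real.exp (-((1/γ + δ) * s)) = Real.exp (-((1/γ) * s)) * Real.exp (-(δ * s)) := by
      rw [← Real.exp_add]; ring_nf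
    simp only
    rw [h1, h2, h3, h4]; ring
  have hI1 : IntegrableOn
      (fun s => (2 * β * u ^ (-(1/γ))) * (s * Real.exp (-((1/γ) * s)))) (Set.Ioi 0) :=
    (aux_int_mul_exp ha).const_mul _
  have hI2 : IntegrableOn
      (fun s => (2 * β * C * u ^ (-(1/γ) - δ)) * (s * Real.exp (-((1/γ + δ) * s))))
      (Set.Ioi 0) := (aux_int_mul_exp hb).const_mul _
  have hItot := hint u huM
  have hI3 : IntegrableOn (fun s => 2 * s * (F (u * Real.exp s)
      - β * (u * Real.exp s) ^ (-(1/γ)) * (1 + C * (u * Real.exp s) ^ (-δ))))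
      (Set.Ioi 0) := by
    apply ((hItot.sub hI1).sub hI2).congr
    rw [Filter.eventuallyEq_iff_exists_mem]
    exact ⟨Set.Ioi 0, (ae_restrict_iff' measurableSet_Ioi).2 (ae_of_all _ fun s hs => hs),
      fun s hs => by
        have h := hEq hs
        simp only [Pi.sub_apply] at h ⊢
        linarith⟩
  have hv : ∀ r K : ℝ, 0 < r →
      ∫ s in Set.Ioi (0:ℝ), K * (s * Real.exp (-(r * s))) = K * (1 / r ^ 2) := by
    intro r K hr
    rw [integral_const_mul, aux_integral_mul_exp hr]
  have e1 : ∫ s in Set.Ioi (0:ℝ), (2 * β * u ^ (-(1/γ))) * (s * Real.exp (-((1/γ) * s)))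
      = 2 * β * γ ^ 2 * u ^ (-(1/γ)) := by
    rw [hv _ _ ha]
    field_simp
  have e2 : ∫ s in Set.Ioi (0:ℝ),
        (2 * β * C * u ^ (-(1/γ) - δ)) * (s * Real.exp (-((1/γ + δ) * s)))
      = 2 * (β * C / (1/γ + δ) ^ 2) * u ^ (-(1/γ) - δ) := by
    rw [hv _ _ hb]
    field_simp
  have hIsum : (∫ s in Set.Ioi (0:ℝ), 2 * s * F (u * Real.exp s))
      - (2 * β * γ ^ 2 * u ^ (-(1/γ)) + 2 * (β * C / (1/γ + δ) ^ 2) * u ^ (-(1/γ) - δ))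
      = ∫ s in Set.Ioi (0:ℝ), 2 * s * (F (u * Real.exp s)
          - β * (u * Real.exp s) ^ (-(1/γ)) * (1 + C * (u * Real.exp s) ^ (-δ))) := by
    rw [setIntegral_congr_fun measurableSet_Ioi hEq]
    have hadd := integral_add (μ := volume.restrict (Set.Ioi 0)) (hI1.add hI2) hI3
    simp only [Pi.add_apply] at hadd
    rw [hadd, integral_add hI1 hI2, e1, e2]
    ring
  have hg3 : ‖∫ s in Set.Ioi (0:ℝ), 2 * s * (F (u * Real.exp s)
        - β * (u * Real.exp s) ^ (-(1/γ)) * (1 + C * (u * Real.exp s) ^ (-δ)))‖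
      ≤ ∫ s in Set.Ioi (0:ℝ),
          (2 * (ε * (1/γ + δ)^2 / 2) * u ^ (-(1/γ) - δ)) * (s * Real.exp (-((1/γ + δ) * s))) := by
    apply norm_integral_le_of_norm_le ((aux_int_mul_exp hb).const_mul _)
    rw [ae_restrict_iff' measurableSet_Ioi]
    filter_upwards with s hs
    rw [Set.mem_Ioi] at hs
    have hMx : M' ≤ u * Real.exp s :=
      le_trans huM' (le_mul_of_one_le_right hu0.le (Real.one_le_exp hs.le))
    have hx0 : (0:ℝ) < u * Real.exp s := by positivity
    have h1 := hM' (u * Real.exp s) hMx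
    rw [Real.norm_eq_abs, Real.norm_eq_abs,
      abs_of_nonneg (Real.rpow_nonneg hx0.le _)] at h1
    have h2 : (u * Real.exp s) ^ (-(1/γ) - δ) = u ^ (-(1/γ) - δ) * Real.exp (-((1/γ + δ) * s)) := by
      rw [show -(1/γ) - δ = -(1/γ + δ) by ring]
      exact aux_rpow_split hu0 _ s
    rw [Real.norm_eq_abs, abs_mul, abs_mul, abs_two, abs_of_nonneg hs.le]
    have h3 : |F (u * Real.exp s)
        - β * (u * Real.exp s) ^ (-(1/γ)) * (1 + C * (u * Real.exp s) ^ (-δ))|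
        ≤ ε * (1/γ + δ)^2 / 2 * (u ^ (-(1/γ) - δ) * Real.exp (-((1/γ + δ) * s))) := by
      rw [← h2]; exact h1
    have h4 : (0:ℝ) ≤ 2 * s := by linarith
    calc 2 * s * |F (u * Real.exp s)
          - β * (u * Real.exp s) ^ (-(1/γ)) * (1 + C * (u * Real.exp s) ^ (-δ))|
        ≤ 2 * s * (ε * (1/γ + δ)^2 / 2 * (u ^ (-(1/γ) - δ) * Real.exp (-((1/γ + δ) * s)))) :=
          mul_le_mul_of_nonneg_left h3 h4
      _ = (2 * (ε * (1/γ + δ)^2 / 2) * u ^ (-(1/γ) - δ)) * (s * Real.exp (-((1/γ + δ) * s))) := by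
          ring
  have hval : ∫ s in Set.Ioi (0:ℝ),
      (2 * (ε * (1/γ + δ)^2 / 2) * u ^ (-(1/γ) - δ)) * (s * Real.exp (-((1/γ + δ) * s)))
      = ε * u ^ (-(1/γ) - δ) := by
    rw [hv _ _ hb]
    field_simp
  rw [hrepr u huM, hIsum]
  have hnorm : ‖(u:ℝ) ^ (-(1/γ) - δ)‖ = u ^ (-(1/γ) - δ) := by
    rw [Real.norm_eq_abs, abs_of_nonneg (Real.rpow_nonneg hu0.le _)]
  rw [hnorm]
  exact le_trans hg3 (le_of_eq hval)
end

section
/- Let Y = α_u^{-1/2}(log(X/u) - γ) 1{X > u} where α_u = P(X > u), and suppose X has tail P(X > x) = β x^{-1/γ}(1 + C x^{-δ} + o(x^{-δ})) as x → ∞ with β, γ, δ > 0. Then as u → ∞: (i) E(Y) = α_u^{-1/2} β C (1/(1/γ+δ) − γ) u^{-1/γ−δ} + o(α_u^{-1/2} u^{-1/γ−δ}) → 0, and (ii) Var(Y) → γ². -/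
open Filter Real Asymptotics MeasureTheory ProbabilityTheory

lemma aux_mom0 {r : ℝ} (hr : 0 < r) :
    (∫ t in Set.Ioi (0:ℝ), Real.exp (-(r * t))) = 1/r := by
  have h := Real.integral_rpow_mul_exp_neg_mul_Ioi (zero_lt_one) hr
  simp only [sub_self, Real.rpow_zero, one_mul, Real.rpow_one, Real.Gamma_one, mul_one] at h
  exact h

lemma aux_mom1 {r : ℝ} (hr : 0 < r) :
    (∫ t in Set.Ioi (0:ℝ), t * Real.exp (-(r * t))) = 1/r^2 := by
  have h := Real.integral_rpow_mul_exp_neg_mul_Ioi (zero_lt_two) hr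
  rw [Real.Gamma_two, mul_one] at h
  rw [show (1/r)^(2:ℝ) = 1/r^2 by rw [Real.rpow_two]; ring] at h
  rw [← h]
  refine setIntegral_congr_fun measurableSet_Ioi (fun t ht => ?_)
  norm_num

lemma aux_int0 {r : ℝ} (hr : 0 < r) :
    IntegrableOn (fun t => Real.exp (-(r * t))) (Set.Ioi (0:ℝ)) := by
  have := exp_neg_integrableOn_Ioi 0 hr
  refine this.congr_fun (fun t _ => ?_) measurableSet_Ioi
  simp only [neg_mul]

lemma aux_int1 {r : ℝ} (hr : 0 < r) :
    IntegrableOn (fun t => t * Real.exp (-(r * t))) (Set.Ioi (0:ℝ)) := by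
  have := integrableOn_rpow_mul_exp_neg_mul_rpow (by norm_num : (-1:ℝ) < 1) one_pos hr
  refine this.congr_fun (fun t ht => ?_) measurableSet_Ioi
  simp only [Real.rpow_one, neg_mul]

lemma aux_split {u : ℝ} (hu : 0 < u) (t a : ℝ) :
    (u * Real.exp t) ^ (-a : ℝ) = u ^ (-a:ℝ) * Real.exp (-(a*t)) := by
  rw [Real.mul_rpow hu.le (Real.exp_pos t).le, ← Real.exp_mul,
    show t * -a = -(a*t) by ring]

set_option maxHeartbeats 2000000 in
/-- Let `Y_u = α_u^{-1/2}(log(X/u) − γ) 1{X > u}` with `α_u = P(X > u)`, where `X` has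
tail `P(X > x) = β x^{-1/γ}(1 + C x^{-δ} + o(x^{-δ}))`, `β, γ, δ > 0`. Then as `u → ∞`:
(i) `E(Y_u) = α_u^{-1/2} βC(1/(1/γ+δ) − γ) u^{-1/γ-δ} + o(α_u^{-1/2} u^{-1/γ-δ}) → 0`,
and (ii) `Var(Y_u) → γ²`. -/
theorem excess_score_mean_variance
    {Ω : Type*} [MeasurableSpace Ω] (μ : Measure Ω) [IsProbabilityMeasure μ]
    (X : Ω → ℝ) (hX : Measurable X) (hXpos : ∀ ω, 0 ≤ X ω)
    (β γ δ C : ℝ) (hβ : 0 < β) (hγ : 0 < γ) (hδ : 0 < δ)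
    (α : ℝ → ℝ) (hα : ∀ u, α u = (μ {ω | u < X ω}).toReal)
    (hS : (fun x : ℝ => α x - β * x ^ (-(1 / γ)) * (1 + C * x ^ (-δ)))
      =o[atTop] (fun x : ℝ => x ^ (-(1 / γ) - δ)))
    (Y : ℝ → Ω → ℝ)
    (hY : ∀ u ω, Y u ω =
      (α u) ^ (-(1 / 2 : ℝ)) * Set.indicator {ω | u < X ω}
        (fun ω => Real.log (X ω / u) - γ) ω) :
    ((fun u : ℝ => (∫ ω, Y u ω ∂μ) -
        (α u) ^ (-(1 / 2 : ℝ)) * β * C * (1 / (1 / γ + δ) - γ) * u ^ (-(1 / γ) - δ))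
      =o[atTop] (fun u : ℝ => (α u) ^ (-(1 / 2 : ℝ)) * u ^ (-(1 / γ) - δ))) ∧
    Tendsto (fun u : ℝ => ∫ ω, Y u ω ∂μ) atTop (nhds 0) ∧
    Tendsto (fun u : ℝ => variance (Y u) μ) atTop (nhds (γ ^ 2)) := by
  have hp : (0:ℝ) < 1 / γ + δ := by positivity
  have hγi : (0:ℝ) < 1 / γ := by positivity
  set q : ℝ := -(1 / γ) - δ with hqdef
  set I0 : ℝ → ℝ := fun u => ∫ t in Set.Ioi (0:ℝ), α (u * Real.exp t) with hI0def
  set I1 : ℝ → ℝ := fun u => ∫ t in Set.Ioi (0:ℝ), t * α (u * Real.exp t) with hI1def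
  have hα0 : ∀ u, 0 ≤ α u := fun u => (hα u) ▸ ENNReal.toReal_nonneg
  have hanti : Antitone α := by
    intro u v huv
    rw [hα u, hα v]
    exact ENNReal.toReal_mono (measure_ne_top μ _)
      (measure_mono (fun ω hω => lt_of_le_of_lt huv hω))
  have htail : ∀ ε > 0, ∃ M : ℝ, 1 ≤ M ∧ ∀ x, M ≤ x →
      |α x - β * x ^ (-(1 / γ)) * (1 + C * x ^ (-δ))| ≤ ε * x ^ q := by
    intro ε hε
    have h := hS.def hε
    rw [eventually_atTop] at h
    obtain ⟨a, ha⟩ := h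
    refine ⟨max a 1, le_max_right _ _, fun x hx => ?_⟩
    have hx1 : (1:ℝ) ≤ x := le_trans (le_max_right a 1) hx
    have := ha x (le_trans (le_max_left a 1) hx)
    rwa [Real.norm_eq_abs, Real.norm_eq_abs,
      abs_of_nonneg (Real.rpow_nonneg (by linarith) q)] at this
  obtain ⟨U, hU1, hUdom⟩ : ∃ U : ℝ, 1 ≤ U ∧ ∀ u, U ≤ u → ∀ t, 0 ≤ t →
      α (u * Real.exp t) ≤ (β * (1 + |C|) + 1) * Real.exp (-(1/γ * t)) := by
    obtain ⟨M, hM1, hM⟩ := htail 1 one_pos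
    refine ⟨M, hM1, fun u hu t ht => ?_⟩
    have hu1 : (1:ℝ) ≤ u := le_trans hM1 hu
    have hu0 : (0:ℝ) < u := lt_of_lt_of_le one_pos hu1
    set x := u * Real.exp t with hxdef
    have hx1 : (1:ℝ) ≤ x := by
      calc (1:ℝ) ≤ u := hu1
      _ = u * 1 := (mul_one u).symm
      _ ≤ u * Real.exp t := by
        exact mul_le_mul_of_nonneg_left (Real.one_le_exp ht) hu0.le
    have hxM : M ≤ x := by
      calc M ≤ u := hu
      _ = u * 1 := (mul_one u).symm
      _ ≤ x := mul_le_mul_of_nonneg_left (Real.one_le_exp ht) hu0.le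
    have hx0 : (0:ℝ) < x := lt_of_lt_of_le one_pos hx1
    have h1 := hM x hxM
    have h2 : α x ≤ β * x ^ (-(1/γ)) * (1 + C * x ^ (-δ)) + x ^ q := by
      have := abs_le.mp h1
      nlinarith [this.2, Real.rpow_nonneg hx0.le q]
    have hxd : C * x ^ (-δ) ≤ |C| := by
      calc C * x ^ (-δ) ≤ |C| * x ^ (-δ) := by
            exact mul_le_mul_of_nonneg_right (le_abs_self C) (Real.rpow_nonneg hx0.le _)
      _ ≤ |C| * 1 := by
            exact mul_le_mul_of_nonneg_left
              (Real.rpow_le_one_of_one_le_of_nonpos hx1 (by linarith)) (abs_nonneg C)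
      _ = |C| := mul_one _
    have hq1 : x ^ q ≤ x ^ (-(1/γ)) :=
      Real.rpow_le_rpow_of_exponent_le hx1 (by rw [hqdef]; linarith)
    have h3 : α x ≤ (β * (1 + |C|) + 1) * x ^ (-(1/γ)) := by
      have hxg : (0:ℝ) ≤ x ^ (-(1/γ)) := Real.rpow_nonneg hx0.le _
      nlinarith [mul_le_mul_of_nonneg_left hxd (mul_nonneg hβ.le hxg), hq1, h2, hxg]
    calc α x ≤ (β * (1 + |C|) + 1) * x ^ (-(1/γ)) := h3
    _ ≤ (β * (1 + |C|) + 1) * Real.exp (-(1/γ * t)) := by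
        refine mul_le_mul_of_nonneg_left ?_ (by positivity)
        rw [hxdef, aux_split hu0 t (1/γ)]
        calc u ^ (-(1/γ)) * Real.exp (-(1/γ * t))
            ≤ 1 * Real.exp (-(1/γ * t)) := by
              exact mul_le_mul_of_nonneg_right
                (Real.rpow_le_one_of_one_le_of_nonpos hu1 (by linarith)) (by positivity)
        _ = _ := one_mul _
  have hintα : ∀ u, U ≤ u → IntegrableOn (fun t => α (u * Real.exp t)) (Set.Ioi (0:ℝ)) := by
    intro u hu
    have hu0 : (0:ℝ) < u := lt_of_lt_of_le one_pos (le_trans hU1 hu)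
    refine Integrable.mono' ((aux_int0 hγi).const_mul (β * (1 + |C|) + 1)) ?_ ?_
    · exact (Antitone.measurable (fun t₁ t₂ h =>
        hanti (mul_le_mul_of_nonneg_left (Real.exp_le_exp.2 h) hu0.le))).aestronglyMeasurable
    · rw [ae_restrict_iff' measurableSet_Ioi]
      filter_upwards with t ht
      rw [Real.norm_eq_abs, abs_of_nonneg (hα0 _)]
      exact hUdom u hu t (le_of_lt ht)
  have hinttα : ∀ u, U ≤ u →
      IntegrableOn (fun t => t * α (u * Real.exp t)) (Set.Ioi (0:ℝ)) := by
    intro u hu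
    have hu0 : (0:ℝ) < u := lt_of_lt_of_le one_pos (le_trans hU1 hu)
    refine Integrable.mono' ((aux_int1 hγi).const_mul (β * (1 + |C|) + 1)) ?_ ?_
    · exact (measurable_id.mul (Antitone.measurable (fun t₁ t₂ h =>
        hanti (mul_le_mul_of_nonneg_left (Real.exp_le_exp.2 h) hu0.le)))).aestronglyMeasurable
    · rw [ae_restrict_iff' measurableSet_Ioi]
      filter_upwards with t ht
      rw [Real.norm_eq_abs, abs_of_nonneg (mul_nonneg (le_of_lt ht) (hα0 _))]
      calc t * α (u * Real.exp t)
          ≤ t * ((β * (1 + |C|) + 1) * Real.exp (-(1/γ * t))) :=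
            mul_le_mul_of_nonneg_left (hUdom u hu t ht.le) ht.le
      _ = (β * (1 + |C|) + 1) * (t * Real.exp (-(1/γ * t))) := by ring

  -- layer cake identities
  have hsetfact : ∀ u, 1 ≤ u → ∀ t ∈ Set.Ioi (0:ℝ),
      {ω | t < Set.indicator {ω | u < X ω} (fun ω => Real.log (X ω / u)) ω}
        = {ω | u * Real.exp t < X ω} := by
    intro u hu1 t ht
    have hu0 : (0:ℝ) < u := lt_of_lt_of_le one_pos hu1
    rw [Set.mem_Ioi] at ht
    ext ω
    simp only [Set.mem_setOf_eq]
    constructor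
    · intro h
      by_cases hm : ω ∈ {ω | u < X ω}
      · rw [Set.indicator_of_mem hm] at h
        have hXω : 0 < X ω := lt_trans hu0 hm
        have h2 : Real.exp t < X ω / u := by
          calc Real.exp t < Real.exp (Real.log (X ω / u)) := Real.exp_lt_exp.2 h
          _ = X ω / u := Real.exp_log (by positivity)
        calc u * Real.exp t < u * (X ω / u) := mul_lt_mul_of_pos_left h2 hu0
        _ = X ω := by field_simp
      · rw [Set.indicator_of_notMem hm] at h; linarith
    · intro h
      have hm : ω ∈ {ω | u < X ω} := by
        simp only [Set.mem_setOf_eq]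
        calc u = u * 1 := (mul_one u).symm
        _ < u * Real.exp t := by
            exact mul_lt_mul_of_pos_left (by simpa using Real.exp_lt_exp.2 ht) hu0
        _ < X ω := h
      rw [Set.indicator_of_mem hm]
      have h2 : Real.exp t < X ω / u := (lt_div_iff₀ hu0).2 (by linarith [mul_comm u (Real.exp t)])
      calc t = Real.log (Real.exp t) := (Real.log_exp t).symm
      _ < Real.log (X ω / u) := Real.log_lt_log (Real.exp_pos t) h2
  have hindnn : ∀ u, 1 ≤ u → ∀ ω,
      0 ≤ Set.indicator {ω | u < X ω} (fun ω => Real.log (X ω / u)) ω := by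
    intro u hu1 ω
    have hu0 : (0:ℝ) < u := lt_of_lt_of_le one_pos hu1
    by_cases hm : ω ∈ {ω | u < X ω}
    · rw [Set.indicator_of_mem hm]
      exact Real.log_nonneg ((one_le_div hu0).2 (le_of_lt hm))
    · rw [Set.indicator_of_notMem hm]
  have hindm : ∀ u : ℝ, Measurable
      (Set.indicator {ω | u < X ω} (fun ω => Real.log (X ω / u))) := by
    intro u
    exact ((hX.div_const u).log).indicator (measurableSet_lt measurable_const hX)
  have hmean : ∀ u, U ≤ u →
      Integrable (Set.indicator {ω | u < X ω} (fun ω => Real.log (X ω / u))) μ ∧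
      ∫ ω, Set.indicator {ω | u < X ω} (fun ω => Real.log (X ω / u)) ω ∂μ = I0 u := by
    intro u hu
    have hu1 : (1:ℝ) ≤ u := le_trans hU1 hu
    set f := Set.indicator {ω | u < X ω} (fun ω => Real.log (X ω / u)) with hfdef
    have key := lintegral_eq_lintegral_meas_lt μ (ae_of_all μ (hindnn u hu1))
      (hindm u).aemeasurable
    have hcongr : ∫⁻ t in Set.Ioi (0:ℝ), μ {a | t < f a}
        = ∫⁻ t in Set.Ioi (0:ℝ), ENNReal.ofReal (α (u * Real.exp t)) := by
      refine setLIntegral_congr_fun measurableSet_Ioi (fun t ht => ?_)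
      rw [hsetfact u hu1 t ht, hα, ENNReal.ofReal_toReal (measure_ne_top μ _)]
    have hfin : ∫⁻ t in Set.Ioi (0:ℝ), ENNReal.ofReal (α (u * Real.exp t)) < ⊤ :=
      (hintα u hu).lintegral_lt_top
    have hint : Integrable f μ := by
      refine ⟨(hindm u).aestronglyMeasurable, ?_⟩
      rw [hasFiniteIntegral_iff_ofReal (ae_of_all μ (hindnn u hu1)), key, hcongr]
      exact hfin
    refine ⟨hint, ?_⟩
    rw [hint.integral_eq_integral_meas_lt (ae_of_all μ (hindnn u hu1))]
    refine setIntegral_congr_fun measurableSet_Ioi (fun t ht => ?_)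
    rw [hsetfact u hu1 t ht, hα, measureReal_def]
  have hsq : ∀ u, U ≤ u →
      Integrable (fun ω => (Set.indicator {ω | u < X ω}
        (fun ω => Real.log (X ω / u)) ω)^2) μ ∧
      ∫ ω, (Set.indicator {ω | u < X ω} (fun ω => Real.log (X ω / u)) ω)^2 ∂μ
        = 2 * I1 u := by
    intro u hu
    have hu1 : (1:ℝ) ≤ u := le_trans hU1 hu
    set f := Set.indicator {ω | u < X ω} (fun ω => Real.log (X ω / u)) with hfdef
    have key := lintegral_comp_eq_lintegral_meas_lt_mul μ (ae_of_all μ (hindnn u hu1))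
      (hindm u).aemeasurable (g := fun t => 2 * t)
      (fun t _ => (continuous_const.mul continuous_id).intervalIntegrable 0 t)
      ((ae_restrict_iff' measurableSet_Ioi).2 (ae_of_all _ (fun t ht => by
        rw [Set.mem_Ioi] at ht; positivity)))
    have hid : ∀ ω, (∫ t in (0:ℝ)..(f ω), 2 * t) = (f ω)^2 := by
      intro ω
      rw [intervalIntegral.integral_const_mul, integral_id]
      ring
    have key2 : ∫⁻ ω, ENNReal.ofReal ((f ω)^2) ∂μ
        = ∫⁻ t in Set.Ioi (0:ℝ), ENNReal.ofReal (2 * (t * α (u * Real.exp t))) := by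
      have key' : ∫⁻ ω, ENNReal.ofReal ((f ω)^2) ∂μ
          = ∫⁻ ω, ENNReal.ofReal (∫ t in (0:ℝ)..(f ω), 2 * t) ∂μ :=
        lintegral_congr (fun ω => by rw [hid ω])
      rw [key', key]
      refine setLIntegral_congr_fun measurableSet_Ioi (fun t ht => ?_)
      rw [hsetfact u hu1 t ht, hα,
        show (2:ℝ) * (t * (μ {ω | u * Real.exp t < X ω}).toReal)
          = (μ {ω | u * Real.exp t < X ω}).toReal * (2 * t) by ring,
        ENNReal.ofReal_mul ENNReal.toReal_nonneg,
        ENNReal.ofReal_toReal (measure_ne_top μ _)]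
    have hfin : ∫⁻ t in Set.Ioi (0:ℝ),
        ENNReal.ofReal (2 * (t * α (u * Real.exp t))) < ⊤ :=
      ((hinttα u hu).const_mul 2).lintegral_lt_top
    have hint : Integrable (fun ω => (f ω)^2) μ := by
      refine ⟨((hindm u).pow_const 2).aestronglyMeasurable, ?_⟩
      rw [hasFiniteIntegral_iff_ofReal (ae_of_all μ (fun ω => sq_nonneg (f ω))), key2]
      exact hfin
    refine ⟨hint, ?_⟩
    have h1 : ∫ ω, (f ω)^2 ∂μ
        = (∫⁻ ω, ENNReal.ofReal ((f ω)^2) ∂μ).toReal := by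
      rw [integral_eq_lintegral_of_nonneg_ae (ae_of_all μ (fun ω => sq_nonneg (f ω)))
        ((hindm u).pow_const 2).aestronglyMeasurable]
    have h2 : ∫ t in Set.Ioi (0:ℝ), 2 * (t * α (u * Real.exp t))
        = (∫⁻ t in Set.Ioi (0:ℝ),
            ENNReal.ofReal (2 * (t * α (u * Real.exp t)))).toReal := by
      rw [integral_eq_lintegral_of_nonneg_ae
        ((ae_restrict_iff' measurableSet_Ioi).2 (ae_of_all _ (fun t ht => by
          rw [Set.mem_Ioi] at ht
          exact mul_nonneg two_pos.le (mul_nonneg ht.le (hα0 _)))))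
        ((hinttα u hu).const_mul 2).aestronglyMeasurable]
    rw [h1, key2, ← h2, MeasureTheory.integral_const_mul]

  have hq2 : q = -(1/γ+δ) := by rw [hqdef]; ring
  have hJint0 : ∀ a : ℝ, 0 < a → ∀ u : ℝ, 0 < u →
      IntegrableOn (fun t => (u * Real.exp t) ^ (-a)) (Set.Ioi (0:ℝ)) := by
    intro a ha u hu
    refine IntegrableOn.congr_fun ((aux_int0 ha).const_mul (u ^ (-a)))
      (fun t _ => (aux_split hu t a).symm) measurableSet_Ioi
  have hJint1 : ∀ a : ℝ, 0 < a → ∀ u : ℝ, 0 < u →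
      IntegrableOn (fun t => t * (u * Real.exp t) ^ (-a)) (Set.Ioi (0:ℝ)) := by
    intro a ha u hu
    refine IntegrableOn.congr_fun ((aux_int1 ha).const_mul (u ^ (-a)))
      (fun t _ => ?_) measurableSet_Ioi
    rw [aux_split hu t a]; ring
  have hJ0 : ∀ a : ℝ, 0 < a → ∀ u : ℝ, 0 < u →
      (∫ t in Set.Ioi (0:ℝ), (u * Real.exp t) ^ (-a)) = u ^ (-a) * (1/a) := by
    intro a ha u hu
    calc (∫ t in Set.Ioi (0:ℝ), (u * Real.exp t) ^ (-a))
        = ∫ t in Set.Ioi (0:ℝ), u ^ (-a) * Real.exp (-(a*t)) :=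
          setIntegral_congr_fun measurableSet_Ioi (fun t _ => aux_split hu t a)
    _ = u ^ (-a) * (1/a) := by rw [MeasureTheory.integral_const_mul, aux_mom0 ha]
  have hJ1 : ∀ a : ℝ, 0 < a → ∀ u : ℝ, 0 < u →
      (∫ t in Set.Ioi (0:ℝ), t * (u * Real.exp t) ^ (-a)) = u ^ (-a) * (1/a^2) := by
    intro a ha u hu
    calc (∫ t in Set.Ioi (0:ℝ), t * (u * Real.exp t) ^ (-a))
        = ∫ t in Set.Ioi (0:ℝ), u ^ (-a) * (t * Real.exp (-(a*t))) :=
          setIntegral_congr_fun measurableSet_Ioi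
            (fun t _ => by rw [aux_split hu t a]; ring)
    _ = u ^ (-a) * (1/a^2) := by rw [MeasureTheory.integral_const_mul, aux_mom1 ha]
  have herr0 : ∀ ε > 0, ∀ᶠ u in atTop,
      |I0 u - (β * γ * u ^ (-(1/γ)) + β * C * (1/(1/γ+δ)) * u ^ q)| ≤ ε * u ^ q := by
    intro ε hε
    have hε' : 0 < ε * (1/γ+δ) := by positivity
    obtain ⟨M, hM1, hM⟩ := htail (ε * (1/γ+δ)) hε'
    rw [eventually_atTop]
    refine ⟨max M U, fun u hu => ?_⟩
    have huM : M ≤ u := le_trans (le_max_left _ _) hu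
    have huU : U ≤ u := le_trans (le_max_right _ _) hu
    have hu1 : (1:ℝ) ≤ u := le_trans hU1 huU
    have hu0 : (0:ℝ) < u := lt_of_lt_of_le one_pos hu1
    have hint1 : IntegrableOn (fun t => β * (u * Real.exp t) ^ (-(1/γ)))
        (Set.Ioi (0:ℝ)) := (hJint0 (1/γ) hγi u hu0).const_mul β
    have hint2 : IntegrableOn (fun t => β * C * (u * Real.exp t) ^ (-(1/γ+δ)))
        (Set.Ioi (0:ℝ)) := (hJint0 (1/γ+δ) hp u hu0).const_mul (β*C)
    have hsplit : I0 u - (β * γ * u ^ (-(1/γ)) + β * C * (1/(1/γ+δ)) * u ^ q)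
        = ∫ t in Set.Ioi (0:ℝ), (α (u * Real.exp t) - β * (u * Real.exp t) ^ (-(1/γ))
            - β * C * (u * Real.exp t) ^ (-(1/γ+δ))) := by
      have hsub : Integrable (fun t => α (u * Real.exp t)
          - β * (u * Real.exp t) ^ (-(1/γ))) (volume.restrict (Set.Ioi (0:ℝ))) :=
        (hintα u huU).sub hint1
      simp only [hI0def]
      rw [MeasureTheory.integral_sub hsub hint2,
        MeasureTheory.integral_sub (hintα u huU) hint1,
        MeasureTheory.integral_const_mul, MeasureTheory.integral_const_mul,
        hJ0 (1/γ) hγi u hu0, hJ0 (1/γ+δ) hp u hu0, hq2, one_div_one_div]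
      ring
    have hbound : ∀ᵐ t ∂(volume.restrict (Set.Ioi (0:ℝ))),
        ‖α (u * Real.exp t) - β * (u * Real.exp t) ^ (-(1/γ))
          - β * C * (u * Real.exp t) ^ (-(1/γ+δ))‖
        ≤ ε * (1/γ+δ) * (u ^ (-(1/γ+δ)) * Real.exp (-((1/γ+δ)*t))) := by
      rw [ae_restrict_iff' measurableSet_Ioi]
      filter_upwards with t ht
      rw [Set.mem_Ioi] at ht
      set x := u * Real.exp t with hxdef
      have hx0 : (0:ℝ) < x := by positivity
      have hxM : M ≤ x := by
        calc M ≤ u := huM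
        _ = u * 1 := (mul_one u).symm
        _ ≤ x := mul_le_mul_of_nonneg_left (Real.one_le_exp ht.le) hu0.le
      have hxadd : x ^ (-(1/γ+δ)) = x ^ (-(1/γ)) * x ^ (-δ) := by
        rw [show -(1/γ+δ) = (-(1/γ)) + (-δ) by ring, Real.rpow_add hx0]
      have habs : α x - β * x ^ (-(1/γ)) - β * C * x ^ (-(1/γ+δ))
          = α x - β * x ^ (-(1/γ)) * (1 + C * x ^ (-δ)) := by rw [hxadd]; ring
      rw [Real.norm_eq_abs, habs, ← aux_split hu0 t (1/γ+δ), ← hxdef, ← hq2]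
      exact hM x hxM
    have hbint : Integrable (fun t => ε * (1/γ+δ)
        * (u ^ (-(1/γ+δ)) * Real.exp (-((1/γ+δ)*t)))) (volume.restrict (Set.Ioi (0:ℝ))) :=
      (((aux_int0 hp).const_mul _).const_mul _)
    have hfinal := MeasureTheory.norm_integral_le_of_norm_le hbint hbound
    rw [← hsplit] at hfinal
    rw [Real.norm_eq_abs] at hfinal
    calc |I0 u - (β * γ * u ^ (-(1/γ)) + β * C * (1/(1/γ+δ)) * u ^ q)|
        ≤ ∫ t in Set.Ioi (0:ℝ), ε * (1/γ+δ)
            * (u ^ (-(1/γ+δ)) * Real.exp (-((1/γ+δ)*t))) := hfinal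
    _ = ε * u ^ q := by
        rw [MeasureTheory.integral_const_mul, MeasureTheory.integral_const_mul,
          aux_mom0 hp, hq2]
        field_simp
  have herr1 : ∀ ε > 0, ∀ᶠ u in atTop,
      |I1 u - (β * γ^2 * u ^ (-(1/γ)) + β * C * (1/(1/γ+δ)^2) * u ^ q)| ≤ ε * u ^ q := by
    intro ε hε
    have hε' : 0 < ε * (1/γ+δ)^2 := by positivity
    obtain ⟨M, hM1, hM⟩ := htail (ε * (1/γ+δ)^2) hε'
    rw [eventually_atTop]
    refine ⟨max M U, fun u hu => ?_⟩
    have huM : M ≤ u := le_trans (le_max_left _ _) hu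
    have huU : U ≤ u := le_trans (le_max_right _ _) hu
    have hu1 : (1:ℝ) ≤ u := le_trans hU1 huU
    have hu0 : (0:ℝ) < u := lt_of_lt_of_le one_pos hu1
    have hint1 : IntegrableOn (fun t => β * (t * (u * Real.exp t) ^ (-(1/γ))))
        (Set.Ioi (0:ℝ)) := (hJint1 (1/γ) hγi u hu0).const_mul β
    have hint2 : IntegrableOn (fun t => β * C * (t * (u * Real.exp t) ^ (-(1/γ+δ))))
        (Set.Ioi (0:ℝ)) := (hJint1 (1/γ+δ) hp u hu0).const_mul (β*C)
    have hsplit : I1 u - (β * γ^2 * u ^ (-(1/γ)) + β * C * (1/(1/γ+δ)^2) * u ^ q)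
        = ∫ t in Set.Ioi (0:ℝ), (t * α (u * Real.exp t)
            - β * (t * (u * Real.exp t) ^ (-(1/γ)))
            - β * C * (t * (u * Real.exp t) ^ (-(1/γ+δ)))) := by
      have hsub : Integrable (fun t => t * α (u * Real.exp t)
          - β * (t * (u * Real.exp t) ^ (-(1/γ)))) (volume.restrict (Set.Ioi (0:ℝ))) :=
        (hinttα u huU).sub hint1
      simp only [hI1def]
      rw [MeasureTheory.integral_sub hsub hint2,
        MeasureTheory.integral_sub (hinttα u huU) hint1,
        MeasureTheory.integral_const_mul, MeasureTheory.integral_const_mul,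
        hJ1 (1/γ) hγi u hu0, hJ1 (1/γ+δ) hp u hu0, hq2,
        show (1:ℝ)/(1/γ)^2 = γ^2 by field_simp]
      ring
    have hbound : ∀ᵐ t ∂(volume.restrict (Set.Ioi (0:ℝ))),
        ‖t * α (u * Real.exp t) - β * (t * (u * Real.exp t) ^ (-(1/γ)))
          - β * C * (t * (u * Real.exp t) ^ (-(1/γ+δ)))‖
        ≤ ε * (1/γ+δ)^2 * (u ^ (-(1/γ+δ)) * (t * Real.exp (-((1/γ+δ)*t)))) := by
      rw [ae_restrict_iff' measurableSet_Ioi]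
      filter_upwards with t ht
      rw [Set.mem_Ioi] at ht
      set x := u * Real.exp t with hxdef
      have hx0 : (0:ℝ) < x := by positivity
      have hxM : M ≤ x := by
        calc M ≤ u := huM
        _ = u * 1 := (mul_one u).symm
        _ ≤ x := mul_le_mul_of_nonneg_left (Real.one_le_exp ht.le) hu0.le
      have hxadd : x ^ (-(1/γ+δ)) = x ^ (-(1/γ)) * x ^ (-δ) := by
        rw [show -(1/γ+δ) = (-(1/γ)) + (-δ) by ring, Real.rpow_add hx0]
      have habs : t * α x - β * (t * x ^ (-(1/γ))) - β * C * (t * x ^ (-(1/γ+δ)))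
          = t * (α x - β * x ^ (-(1/γ)) * (1 + C * x ^ (-δ))) := by rw [hxadd]; ring
      rw [Real.norm_eq_abs, habs, abs_mul, abs_of_nonneg ht.le]
      calc t * |α x - β * x ^ (-(1/γ)) * (1 + C * x ^ (-δ))|
          ≤ t * (ε * (1/γ+δ)^2 * x ^ q) :=
            mul_le_mul_of_nonneg_left (hM x hxM) ht.le
      _ = ε * (1/γ+δ)^2 * (u ^ (-(1/γ+δ)) * (t * Real.exp (-((1/γ+δ)*t)))) := by
            rw [hq2, hxdef, aux_split hu0 t (1/γ+δ)]
            ring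
    have hbint : Integrable (fun t => ε * (1/γ+δ)^2
        * (u ^ (-(1/γ+δ)) * (t * Real.exp (-((1/γ+δ)*t)))))
        (volume.restrict (Set.Ioi (0:ℝ))) :=
      (((aux_int1 hp).const_mul _).const_mul _)
    have hfinal := MeasureTheory.norm_integral_le_of_norm_le hbint hbound
    rw [← hsplit, Real.norm_eq_abs] at hfinal
    calc |I1 u - (β * γ^2 * u ^ (-(1/γ)) + β * C * (1/(1/γ+δ)^2) * u ^ q)|
        ≤ ∫ t in Set.Ioi (0:ℝ), ε * (1/γ+δ)^2
            * (u ^ (-(1/γ+δ)) * (t * Real.exp (-((1/γ+δ)*t)))) := hfinal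
    _ = ε * u ^ q := by
        rw [MeasureTheory.integral_const_mul, MeasureTheory.integral_const_mul,
          aux_mom1 hp, hq2]
        field_simp

  have hαr : Tendsto (fun u => u ^ (1/γ) * α u) atTop (nhds β) := by
    rw [Metric.tendsto_nhds]
    intro ε hε
    obtain ⟨M, hM1, hM⟩ := htail (ε/3) (by positivity)
    have h2 : ∀ᶠ u : ℝ in atTop, |β*C*u^(-δ)| < ε/3 := by
      have h3 : Tendsto (fun u : ℝ => β*C*u^(-δ)) atTop (nhds 0) := by
        have h4 := (tendsto_rpow_neg_atTop hδ).const_mul (β*C)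
        rwa [mul_zero] at h4
      have := Metric.tendsto_nhds.mp h3 (ε/3) (by positivity)
      filter_upwards [this] with u hu
      rwa [Real.dist_eq, sub_zero] at hu
    filter_upwards [h2, eventually_ge_atTop (max M 1)] with u h2u hu
    have huM : M ≤ u := le_trans (le_max_left _ _) hu
    have hu1 : (1:ℝ) ≤ u := le_trans (le_max_right _ _) hu
    have hu0 : (0:ℝ) < u := lt_of_lt_of_le one_pos hu1
    have e1 : u ^ ((1:ℝ)/γ) * u ^ (-(1/γ)) = 1 := by
      rw [← Real.rpow_add hu0]; norm_num
    have e2 : u ^ ((1:ℝ)/γ) * u ^ q = u ^ (-δ) := by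
      rw [← Real.rpow_add hu0, show 1/γ + q = -δ by rw [hqdef]; ring]
    have e3 : u ^ ((1:ℝ)/γ) * (α u - β*u^(-(1/γ))*(1+C*u^(-δ)))
        = u^((1:ℝ)/γ)*α u - (β + β*C*u^(-δ)) := by
      linear_combination (-(β + β*C*u^(-δ))) * e1
    have h4 : |u^((1:ℝ)/γ)*α u - (β + β*C*u^(-δ))| ≤ ε/3 := by
      rw [← e3, abs_mul, abs_of_nonneg (Real.rpow_nonneg hu0.le _)]
      calc u^((1:ℝ)/γ) * |α u - β*u^(-(1/γ))*(1+C*u^(-δ))|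
          ≤ u^((1:ℝ)/γ) * (ε/3 * u ^ q) :=
            mul_le_mul_of_nonneg_left (hM u huM) (Real.rpow_nonneg hu0.le _)
      _ = ε/3 * u ^ (-δ) := by rw [← e2]; ring
      _ ≤ ε/3 * 1 := mul_le_mul_of_nonneg_left
            (Real.rpow_le_one_of_one_le_of_nonpos hu1 (by linarith)) (by positivity)
      _ = ε/3 := mul_one _
    rw [Real.dist_eq]
    have : u^((1:ℝ)/γ)*α u - β = (u^((1:ℝ)/γ)*α u - (β + β*C*u^(-δ))) + β*C*u^(-δ) := by
      ring
    calc |u^((1:ℝ)/γ)*α u - β|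
        ≤ |u^((1:ℝ)/γ)*α u - (β + β*C*u^(-δ))| + |β*C*u^(-δ)| := by
          rw [this]; exact abs_add_le _ _
    _ < ε := by linarith
  have hI0r : Tendsto (fun u => u ^ (1/γ) * I0 u) atTop (nhds (β * γ)) := by
    rw [Metric.tendsto_nhds]
    intro ε hε
    have h2 : ∀ᶠ u : ℝ in atTop, |β*C*(1/(1/γ+δ))*u^(-δ)| < ε/3 := by
      have h3 : Tendsto (fun u : ℝ => β*C*(1/(1/γ+δ))*u^(-δ)) atTop (nhds 0) := by
        have h4 := (tendsto_rpow_neg_atTop hδ).const_mul (β*C*(1/(1/γ+δ)))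
        rwa [mul_zero] at h4
      have := Metric.tendsto_nhds.mp h3 (ε/3) (by positivity)
      filter_upwards [this] with u hu
      rwa [Real.dist_eq, sub_zero] at hu
    filter_upwards [h2, herr0 (ε/3) (by positivity), eventually_ge_atTop 1]
      with u h2u herru hu1
    have hu0 : (0:ℝ) < u := lt_of_lt_of_le one_pos hu1
    have e1 : u ^ ((1:ℝ)/γ) * u ^ (-(1/γ)) = 1 := by
      rw [← Real.rpow_add hu0]; norm_num
    have e2 : u ^ ((1:ℝ)/γ) * u ^ q = u ^ (-δ) := by
      rw [← Real.rpow_add hu0, show 1/γ + q = -δ by rw [hqdef]; ring]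
    have e3 : u ^ ((1:ℝ)/γ) * (I0 u - (β*γ*u^(-(1/γ)) + β*C*(1/(1/γ+δ))*u^q))
        = u^((1:ℝ)/γ)*I0 u - (β*γ + β*C*(1/(1/γ+δ))*u^(-δ)) := by
      linear_combination (-(β*γ)) * e1 + (-(β*C*(1/(1/γ+δ)))) * e2
    have h4 : |u^((1:ℝ)/γ)*I0 u - (β*γ + β*C*(1/(1/γ+δ))*u^(-δ))| ≤ ε/3 := by
      rw [← e3, abs_mul, abs_of_nonneg (Real.rpow_nonneg hu0.le _)]
      calc u^((1:ℝ)/γ) * |I0 u - (β*γ*u^(-(1/γ)) + β*C*(1/(1/γ+δ))*u^q)|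
          ≤ u^((1:ℝ)/γ) * (ε/3 * u ^ q) :=
            mul_le_mul_of_nonneg_left herru (Real.rpow_nonneg hu0.le _)
      _ = ε/3 * u ^ (-δ) := by rw [← e2]; ring
      _ ≤ ε/3 * 1 := mul_le_mul_of_nonneg_left
            (Real.rpow_le_one_of_one_le_of_nonpos hu1 (by linarith)) (by positivity)
      _ = ε/3 := mul_one _
    rw [Real.dist_eq]
    have heq : u^((1:ℝ)/γ)*I0 u - β*γ
        = (u^((1:ℝ)/γ)*I0 u - (β*γ + β*C*(1/(1/γ+δ))*u^(-δ)))
          + β*C*(1/(1/γ+δ))*u^(-δ) := by ring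
    calc |u^((1:ℝ)/γ)*I0 u - β*γ|
        ≤ |u^((1:ℝ)/γ)*I0 u - (β*γ + β*C*(1/(1/γ+δ))*u^(-δ))|
          + |β*C*(1/(1/γ+δ))*u^(-δ)| := by rw [heq]; exact abs_add_le _ _
    _ < ε := by linarith
  have hI1r : Tendsto (fun u => u ^ (1/γ) * I1 u) atTop (nhds (β * γ^2)) := by
    rw [Metric.tendsto_nhds]
    intro ε hε
    have h2 : ∀ᶠ u : ℝ in atTop, |β*C*(1/(1/γ+δ)^2)*u^(-δ)| < ε/3 := by
      have h3 : Tendsto (fun u : ℝ => β*C*(1/(1/γ+δ)^2)*u^(-δ)) atTop (nhds 0) := by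
        have h4 := (tendsto_rpow_neg_atTop hδ).const_mul (β*C*(1/(1/γ+δ)^2))
        rwa [mul_zero] at h4
      have := Metric.tendsto_nhds.mp h3 (ε/3) (by positivity)
      filter_upwards [this] with u hu
      rwa [Real.dist_eq, sub_zero] at hu
    filter_upwards [h2, herr1 (ε/3) (by positivity), eventually_ge_atTop 1]
      with u h2u herru hu1
    have hu0 : (0:ℝ) < u := lt_of_lt_of_le one_pos hu1
    have e1 : u ^ ((1:ℝ)/γ) * u ^ (-(1/γ)) = 1 := by
      rw [← Real.rpow_add hu0]; norm_num
    have e2 : u ^ ((1:ℝ)/γ) * u ^ q = u ^ (-δ) := by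
      rw [← Real.rpow_add hu0, show 1/γ + q = -δ by rw [hqdef]; ring]
    have e3 : u ^ ((1:ℝ)/γ) * (I1 u - (β*γ^2*u^(-(1/γ)) + β*C*(1/(1/γ+δ)^2)*u^q))
        = u^((1:ℝ)/γ)*I1 u - (β*γ^2 + β*C*(1/(1/γ+δ)^2)*u^(-δ)) := by
      linear_combination (-(β*γ^2)) * e1 + (-(β*C*(1/(1/γ+δ)^2))) * e2
    have h4 : |u^((1:ℝ)/γ)*I1 u - (β*γ^2 + β*C*(1/(1/γ+δ)^2)*u^(-δ))| ≤ ε/3 := by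
      rw [← e3, abs_mul, abs_of_nonneg (Real.rpow_nonneg hu0.le _)]
      calc u^((1:ℝ)/γ) * |I1 u - (β*γ^2*u^(-(1/γ)) + β*C*(1/(1/γ+δ)^2)*u^q)|
          ≤ u^((1:ℝ)/γ) * (ε/3 * u ^ q) :=
            mul_le_mul_of_nonneg_left herru (Real.rpow_nonneg hu0.le _)
      _ = ε/3 * u ^ (-δ) := by rw [← e2]; ring
      _ ≤ ε/3 * 1 := mul_le_mul_of_nonneg_left
            (Real.rpow_le_one_of_one_le_of_nonpos hu1 (by linarith)) (by positivity)
      _ = ε/3 := mul_one _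
    rw [Real.dist_eq]
    have heq : u^((1:ℝ)/γ)*I1 u - β*γ^2
        = (u^((1:ℝ)/γ)*I1 u - (β*γ^2 + β*C*(1/(1/γ+δ)^2)*u^(-δ)))
          + β*C*(1/(1/γ+δ)^2)*u^(-δ) := by ring
    calc |u^((1:ℝ)/γ)*I1 u - β*γ^2|
        ≤ |u^((1:ℝ)/γ)*I1 u - (β*γ^2 + β*C*(1/(1/γ+δ)^2)*u^(-δ))|
          + |β*C*(1/(1/γ+δ)^2)*u^(-δ)| := by rw [heq]; exact abs_add_le _ _
    _ < ε := by linarith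
  have hαpos : ∀ᶠ u in atTop, 0 < α u := by
    have := Metric.tendsto_nhds.mp hαr (β/2) (by positivity)
    filter_upwards [this, eventually_ge_atTop 1] with u hu hu1
    have hu0 : (0:ℝ) < u := lt_of_lt_of_le one_pos hu1
    rw [Real.dist_eq] at hu
    have h1 : β/2 < u^((1:ℝ)/γ) * α u := by
      have := abs_lt.mp hu
      linarith [this.1]
    nlinarith [Real.rpow_pos_of_pos hu0 ((1:ℝ)/γ), hα0 u]
  have hM0 : Tendsto (fun u => I0 u / α u) atTop (nhds γ) := by
    have hdiv := hI0r.div hαr (ne_of_gt hβ)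
    have hval : (β*γ)/β = γ := by field_simp
    rw [hval] at hdiv
    refine Tendsto.congr' ?_ hdiv
    filter_upwards [hαpos, eventually_ge_atTop 1] with u hau hu1
    have hu0 : (0:ℝ) < u := lt_of_lt_of_le one_pos hu1
    exact mul_div_mul_left _ _ (ne_of_gt (Real.rpow_pos_of_pos hu0 _))
  have hM1 : Tendsto (fun u => I1 u / α u) atTop (nhds (γ^2)) := by
    have hdiv := hI1r.div hαr (ne_of_gt hβ)
    have hval : (β*γ^2)/β = γ^2 := by field_simp
    rw [hval] at hdiv
    refine Tendsto.congr' ?_ hdiv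
    filter_upwards [hαpos, eventually_ge_atTop 1] with u hau hu1
    have hu0 : (0:ℝ) < u := lt_of_lt_of_le one_pos hu1
    exact mul_div_mul_left _ _ (ne_of_gt (Real.rpow_pos_of_pos hu0 _))
  have hEY : ∀ᶠ u in atTop, (∫ ω, Y u ω ∂μ)
      = α u ^ (-(1/2 : ℝ)) * (I0 u - γ * α u) := by
    filter_upwards [eventually_ge_atTop U] with u hu
    have hs : MeasurableSet {ω | u < X ω} := measurableSet_lt measurable_const hX
    have hY' : ∫ ω, Y u ω ∂μ = α u ^ (-(1/2:ℝ)) *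
        ∫ ω, Set.indicator {ω | u < X ω} (fun ω => Real.log (X ω / u) - γ) ω ∂μ := by
      rw [← MeasureTheory.integral_const_mul]
      exact integral_congr_ae (ae_of_all μ fun ω => hY u ω)
    have hInd : ∀ ω, Set.indicator {ω | u < X ω} (fun ω => Real.log (X ω / u) - γ) ω
        = Set.indicator {ω | u < X ω} (fun ω => Real.log (X ω / u)) ω
          - Set.indicator {ω | u < X ω} (fun _ => γ) ω := by
      intro ω; by_cases h : ω ∈ {ω | u < X ω} <;> simp [h]
    have hintc : Integrable (Set.indicator {ω | u < X ω} (fun _ => γ)) μ :=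
      (integrable_const γ).indicator hs
    rw [hY', integral_congr_ae (ae_of_all μ hInd),
      MeasureTheory.integral_sub (hmean u hu).1 hintc, (hmean u hu).2,
      integral_indicator_const γ hs, smul_eq_mul, measureReal_def, ← hα]
    ring
  have hsmall : (fun u => I0 u - γ * α u - β * C * (1/(1/γ+δ) - γ) * u ^ q)
      =o[atTop] (fun u : ℝ => u ^ q) := by
    rw [isLittleO_iff]
    intro c hc
    obtain ⟨M, hM1, hM⟩ := htail (c/(2*γ)) (by positivity)
    filter_upwards [herr0 (c/2) (half_pos hc), eventually_ge_atTop (max M 1)] with u h0 hu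
    have huM : M ≤ u := le_trans (le_max_left _ _) hu
    have hu1 : (1:ℝ) ≤ u := le_trans (le_max_right _ _) hu
    have hu0 : (0:ℝ) < u := lt_of_lt_of_le one_pos hu1
    have errq : u^(-(1/γ)) * u^(-δ) = u ^ q := by
      rw [← Real.rpow_add hu0, show -(1/γ) + -δ = q by rw [hqdef]; ring]
    have hiden : I0 u - γ*α u - β*C*(1/(1/γ+δ) - γ)*u^q
        = (I0 u - (β*γ*u^(-(1/γ)) + β*C*(1/(1/γ+δ))*u^q))
          - γ*(α u - β*u^(-(1/γ))*(1+C*u^(-δ))) := by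
      linear_combination (-(γ*β*C)) * errq
    rw [Real.norm_eq_abs, Real.norm_eq_abs, hiden,
      abs_of_pos (Real.rpow_pos_of_pos hu0 q)]
    have h2 := hM u huM
    have h3 : γ * |α u - β*u^(-(1/γ))*(1+C*u^(-δ))| ≤ γ * (c/(2*γ) * u^q) :=
      mul_le_mul_of_nonneg_left h2 hγ.le
    have h4 : γ * (c/(2*γ) * u^q) = c/2 * u^q := by field_simp
    have h5 := abs_add_le (I0 u - (β*γ*u^(-(1/γ)) + β*C*(1/(1/γ+δ))*u^q))
      (-(γ*(α u - β*u^(-(1/γ))*(1+C*u^(-δ)))))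
    rw [abs_neg] at h5
    rw [abs_mul, abs_of_pos hγ] at h5
    calc |I0 u - (β*γ*u^(-(1/γ)) + β*C*(1/(1/γ+δ))*u^q)
          - γ*(α u - β*u^(-(1/γ))*(1+C*u^(-δ)))|
        ≤ |I0 u - (β*γ*u^(-(1/γ)) + β*C*(1/(1/γ+δ))*u^q)|
          + γ * |α u - β*u^(-(1/γ))*(1+C*u^(-δ))| := by
          rw [sub_eq_add_neg]; exact h5
    _ ≤ c/2 * u^q + c/2 * u^q := by
        refine add_le_add h0 ?_
        rw [← h4]; exact h3
    _ = c * u ^ q := by ring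
  have goal1 : (fun u : ℝ => (∫ ω, Y u ω ∂μ) -
        (α u) ^ (-(1 / 2 : ℝ)) * β * C * (1 / (1 / γ + δ) - γ) * u ^ q)
      =o[atTop] (fun u : ℝ => (α u) ^ (-(1 / 2 : ℝ)) * u ^ q) := by
    have base := (isBigO_refl (fun u : ℝ => (α u) ^ (-(1/2:ℝ))) atTop).mul_isLittleO hsmall
    refine base.congr' ?_ EventuallyEq.rfl
    filter_upwards [hEY] with u h
    rw [h]; ring
  have hD : Tendsto (fun u : ℝ => (α u) ^ (-(1/2:ℝ)) * u ^ q) atTop (nhds 0) := by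
    have h1 : Tendsto (fun u : ℝ => (u ^ ((1:ℝ)/γ) * α u) ^ (-(1/2:ℝ))
        * u ^ (q + 1/(2*γ))) atTop (nhds 0) := by
      have ha : Tendsto (fun u : ℝ => (u ^ ((1:ℝ)/γ) * α u) ^ (-(1/2:ℝ))) atTop
          (nhds (β ^ (-(1/2:ℝ)))) := hαr.rpow_const (Or.inl (ne_of_gt hβ))
      have hb : Tendsto (fun u : ℝ => u ^ (q + 1/(2*γ))) atTop (nhds 0) := by
        rw [show q + 1/(2*γ) = -(1/(2*γ) + δ) by rw [hqdef]; ring]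
        exact tendsto_rpow_neg_atTop (by positivity)
      have := ha.mul hb
      rwa [mul_zero] at this
    refine Tendsto.congr' ?_ h1
    filter_upwards [hαpos, eventually_ge_atTop 1] with u hau hu1
    have hu0 : (0:ℝ) < u := lt_of_lt_of_le one_pos hu1
    have e5 : (u ^ ((1:ℝ)/γ)) ^ (-(1/2:ℝ)) = u ^ (-(1/(2*γ))) := by
      rw [← Real.rpow_mul hu0.le]; congr 1; ring
    have e6 : u ^ (-(1/(2*γ))) * u ^ (q + 1/(2*γ)) = u ^ q := by
      rw [← Real.rpow_add hu0]; congr 1; ring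
    calc (u^((1:ℝ)/γ) * α u)^(-(1/2:ℝ)) * u^(q+1/(2*γ))
        = (u^((1:ℝ)/γ))^(-(1/2:ℝ)) * (α u)^(-(1/2:ℝ)) * u^(q+1/(2*γ)) := by
          rw [Real.mul_rpow (Real.rpow_nonneg hu0.le _) (hα0 u)]
    _ = α u ^ (-(1/2:ℝ)) * (u ^ (-(1/(2*γ))) * u^(q+1/(2*γ))) := by rw [e5]; ring
    _ = α u ^ (-(1/2:ℝ)) * u ^ q := by rw [e6]
  have goal2 : Tendsto (fun u : ℝ => ∫ ω, Y u ω ∂μ) atTop (nhds 0) := by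
    have herrt : Tendsto (fun u => (∫ ω, Y u ω ∂μ)
        - (α u)^(-(1/2:ℝ))*β*C*(1/(1/γ+δ)-γ)*u^q) atTop (nhds 0) := by
      refine squeeze_zero_norm' ?_ (by simpa using hD.norm)
      filter_upwards [goal1.def one_pos] with u h
      simpa using h
    have hT : Tendsto (fun u : ℝ => (α u)^(-(1/2:ℝ))*β*C*(1/(1/γ+δ)-γ)*u^q)
        atTop (nhds 0) := by
      have h5 := hD.const_mul (β*C*(1/(1/γ+δ)-γ))
      rw [mul_zero] at h5
      exact h5.congr (fun u => by ring)
    have := herrt.add hT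
    rw [add_zero] at this
    exact this.congr (fun u => by ring)
  have hvar : ∀ᶠ u in atTop, variance (Y u) μ
      = (2 * I1 u - 2 * γ * I0 u + γ^2 * α u) / α u - (∫ ω, Y u ω ∂μ)^2 := by
    filter_upwards [eventually_ge_atTop U, hαpos] with u hu hau
    have hs : MeasurableSet {ω | u < X ω} := measurableSet_lt measurable_const hX
    have hfint := (hmean u hu).1
    have hfval := (hmean u hu).2
    have hf2int := (hsq u hu).1
    have hf2val := (hsq u hu).2
    have hindc : Integrable (Set.indicator {ω | u < X ω} (fun _ => (1:ℝ))) μ :=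
      (integrable_const 1).indicator hs
    have hexp : ∀ ω, (Set.indicator {ω | u < X ω}
          (fun ω => Real.log (X ω / u) - γ) ω)^2
        = (Set.indicator {ω | u < X ω} (fun ω => Real.log (X ω / u)) ω)^2
          - 2*γ*(Set.indicator {ω | u < X ω} (fun ω => Real.log (X ω / u)) ω)
          + γ^2 * Set.indicator {ω | u < X ω} (fun _ => (1:ℝ)) ω := by
      intro ω
      by_cases h : ω ∈ {ω | u < X ω} <;> simp [h] <;> ring
    have hintsq : Integrable (fun ω => (Set.indicator {ω | u < X ω}
        (fun ω => Real.log (X ω / u) - γ) ω)^2) μ := by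
      have hint3 : Integrable (fun ω =>
          (Set.indicator {ω | u < X ω} (fun ω => Real.log (X ω / u)) ω)^2
          - 2*γ*(Set.indicator {ω | u < X ω} (fun ω => Real.log (X ω / u)) ω)
          + γ^2 * Set.indicator {ω | u < X ω} (fun _ => (1:ℝ)) ω) μ :=
        (hf2int.sub (hfint.const_mul (2*γ))).add (hindc.const_mul (γ^2))
      exact hint3.congr (ae_of_all μ fun ω => (hexp ω).symm)
    have hmem : MemLp (Y u) 2 μ := by
      have hm2 : MemLp (Set.indicator {ω | u < X ω}
          (fun ω => Real.log (X ω / u) - γ)) 2 μ := by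
        rw [memLp_two_iff_integrable_sq
          (f := Set.indicator {ω | u < X ω} (fun ω => Real.log (X ω / u) - γ))
          (((hX.div_const u).log.sub measurable_const).indicator hs).aestronglyMeasurable]
        exact hintsq
      exact MemLp.ae_eq (ae_of_all μ fun ω => (hY u ω).symm) (hm2.const_mul _)
    rw [ProbabilityTheory.variance_eq_sub hmem]
    have hc2 : ((α u) ^ (-(1/2:ℝ)))^2 = (α u)⁻¹ := by
      rw [← Real.rpow_natCast ((α u) ^ (-(1/2:ℝ))) 2, ← Real.rpow_mul (hα0 u),
        show (-(1/2:ℝ)) * ((2:ℕ):ℝ) = -1 by push_cast; ring, Real.rpow_neg_one]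
    have hY2 : ∀ ω, (Y u ω)^2 = (α u)⁻¹
        * ((Set.indicator {ω | u < X ω} (fun ω => Real.log (X ω / u)) ω)^2
          - 2*γ*(Set.indicator {ω | u < X ω} (fun ω => Real.log (X ω / u)) ω)
          + γ^2 * Set.indicator {ω | u < X ω} (fun _ => (1:ℝ)) ω) := by
      intro ω
      rw [hY u ω, mul_pow, hc2, hexp ω]
    have hIY2 : (∫ ω, (Y u ω)^2 ∂μ)
        = (α u)⁻¹ * (2*I1 u - 2*γ*I0 u + γ^2*α u) := by
      rw [integral_congr_ae (ae_of_all μ hY2), MeasureTheory.integral_const_mul]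
      congr 1
      have hia : Integrable (fun ω =>
          (Set.indicator {ω | u < X ω} (fun ω => Real.log (X ω / u)) ω)^2
          - 2*γ*(Set.indicator {ω | u < X ω} (fun ω => Real.log (X ω / u)) ω)) μ :=
        hf2int.sub (hfint.const_mul (2*γ))
      have hib : Integrable (fun ω =>
          γ^2 * Set.indicator {ω | u < X ω} (fun _ => (1:ℝ)) ω) μ :=
        hindc.const_mul (γ^2)
      rw [MeasureTheory.integral_add hia hib,
        MeasureTheory.integral_sub hf2int (hfint.const_mul (2*γ)),
        MeasureTheory.integral_const_mul, MeasureTheory.integral_const_mul,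
        hf2val, hfval, integral_indicator_const (1:ℝ) hs, smul_eq_mul, mul_one, measureReal_def, ← hα]
    have hvintegral : (∫ ω, (Y u ^ 2) ω ∂μ) = (∫ ω, (Y u ω)^2 ∂μ) := rfl
    rw [hvintegral, hIY2, inv_mul_eq_div]
  have goal3 : Tendsto (fun u : ℝ => variance (Y u) μ) atTop (nhds (γ ^ 2)) := by
    have hdiveq : ∀ᶠ u in atTop, 2*(I1 u/α u) - 2*γ*(I0 u/α u) + γ^2
        = (2*I1 u - 2*γ*I0 u + γ^2*α u)/α u := by
      filter_upwards [hαpos] with u h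
      field_simp
    have ha : Tendsto (fun u => (2*I1 u - 2*γ*I0 u + γ^2*α u)/α u) atTop
        (nhds (γ^2)) := by
      have hb : Tendsto (fun u => 2*(I1 u/α u) - 2*γ*(I0 u/α u) + γ^2) atTop
          (nhds (2*γ^2 - 2*γ*γ + γ^2)) :=
        ((hM1.const_mul 2).sub (hM0.const_mul (2*γ))).add tendsto_const_nhds
      rw [show 2*γ^2 - 2*γ*γ + γ^2 = γ^2 by ring] at hb
      exact Tendsto.congr' hdiveq hb
    have hsq2 : Tendsto (fun u : ℝ => (∫ ω, Y u ω ∂μ)^2) atTop (nhds 0) := by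
      have h := goal2.mul goal2
      rw [mul_zero] at h
      exact h.congr (fun u => (pow_two _).symm)
    have hfinal := ha.sub hsq2
    rw [sub_zero] at hfinal
    exact Tendsto.congr' (hvar.mono fun u h => h.symm) hfinal
  exact ⟨goal1, goal2, goal3⟩
end

section
/- Let q_{1−τ} satisfy P(X > q_{1−τ}) = τ and define the approximate quantile q^{(a)}_{1−τ} = u (α_u/τ)^γ with α_u = P(X > u). If P(X > x) = β x^{-1/γ}(1 + C x^{-δ} + o(x^{-δ})) as x → ∞ with β, γ, δ > 0, and u → ∞ with 0 < τ < α_u and τ → 0, then q^{(a)}_{1−τ} / q_{1−τ} → 1. -/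
open Filter Real Asymptotics MeasureTheory

/-- Consistency of the Weissman-type approximate quantile: if
`P(X > x) = β x^{-1/γ}(1 + C x^{-δ} + o(x^{-δ}))` with `β, γ, δ > 0`, the exact
quantile `q_{1-τ}` satisfies `P(X > q_{1-τ}) = τ`, the approximation is
`q^{(a)}_{1-τ} = u (α_u/τ)^γ` with `α_u = P(X > u)`, and `u → ∞`, `0 < τ < α_u`,
`τ → 0` (so `q_{1-τ} → ∞`), then `q^{(a)}_{1-τ} / q_{1-τ} → 1`. -/
theorem weissman_quantile_consistency
    {Ω : Type*} [MeasurableSpace Ω] (μ : Measure Ω) [IsProbabilityMeasure μ]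
    (X : Ω → ℝ) (β γ δ C : ℝ) (hβ : 0 < β) (hγ : 0 < γ) (hδ : 0 < δ)
    (hS : (fun x : ℝ => (μ {ω | x < X ω}).toReal - β * x ^ (-(1 / γ)) * (1 + C * x ^ (-δ)))
      =o[atTop] (fun x : ℝ => x ^ (-(1 / γ) - δ)))
    (u τ q : ℕ → ℝ)
    (hu : Tendsto u atTop atTop)
    (hq : ∀ i, (μ {ω | q i < X ω}).toReal = τ i)
    (hτpos : ∀ i, 0 < τ i) (hτlt : ∀ i, τ i < (μ {ω | u i < X ω}).toReal)
    (hτ0 : Tendsto τ atTop (nhds 0)) (hqinf : Tendsto q atTop atTop) :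
    Tendsto (fun i => u i * ((μ {ω | u i < X ω}).toReal / τ i) ^ γ / q i)
      atTop (nhds 1) := by
  set S : ℝ → ℝ := fun x => (μ {ω | x < X ω}).toReal with hSdef
  set g : ℝ → ℝ := fun x => S x * x ^ (1 / γ) / β with hgdef
  have hβ0 : β ≠ 0 := ne_of_gt hβ
  have hγ0 : γ ≠ 0 := ne_of_gt hγ
  -- error term tends to 0
  have herr : Tendsto (fun x : ℝ =>
      (S x - β * x ^ (-(1 / γ)) * (1 + C * x ^ (-δ))) * (x ^ (1/γ) / β)) atTop (nhds 0) := by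
    have h1 := hS.mul_isBigO (isBigO_refl (fun x : ℝ => x ^ (1/γ) / β) atTop)
    have h2 : (fun x : ℝ => x ^ (-(1 / γ) - δ) * (x ^ (1/γ) / β)) =ᶠ[atTop]
        fun x => x ^ (-δ) / β := by
      filter_upwards [eventually_gt_atTop (0:ℝ)] with x hx
      rw [div_eq_mul_inv, div_eq_mul_inv, ← mul_assoc, ← Real.rpow_add hx]
      ring_nf
    have h3 : Tendsto (fun x : ℝ => x ^ (-δ) / β) atTop (nhds 0) := by
      simpa using (tendsto_rpow_neg_atTop hδ).div_const β
    exact (h1.trans_eventuallyEq h2).isBigO.trans_tendsto h3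
  have hg1 : Tendsto g atTop (nhds 1) := by
    have hadd : Tendsto (fun x : ℝ =>
        (S x - β * x ^ (-(1 / γ)) * (1 + C * x ^ (-δ))) * (x ^ (1/γ) / β)
          + (1 + C * x ^ (-δ))) atTop (nhds 1) := by
      have h4 : Tendsto (fun x : ℝ => 1 + C * x ^ (-δ)) atTop (nhds 1) := by
        have := (tendsto_rpow_neg_atTop hδ).const_mul C
        simpa using (tendsto_const_nhds (x := (1:ℝ))).add this
      simpa using herr.add h4
    refine Tendsto.congr' ?_ hadd
    filter_upwards [eventually_gt_atTop (0:ℝ)] with x hx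
    have hP : (0:ℝ) < x ^ (1/γ) := Real.rpow_pos_of_pos hx _
    simp only [hgdef]
    rw [Real.rpow_neg hx.le]
    field_simp
    ring
  -- key identity: S x = β x^{-1/γ} g x for x > 0
  have hSid : ∀ x : ℝ, 0 < x → S x = β * x ^ (-(1/γ)) * g x := by
    intro x hx
    have hP : (0:ℝ) < x ^ (1/γ) := Real.rpow_pos_of_pos hx _
    simp only [hgdef]
    rw [Real.rpow_neg hx.le]
    field_simp
  have hgu : Tendsto (fun i => g (u i)) atTop (nhds 1) := hg1.comp hu
  have hgq : Tendsto (fun i => g (q i)) atTop (nhds 1) := hg1.comp hqinf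
  have hlim : Tendsto (fun i => (g (u i) / g (q i)) ^ γ) atTop (nhds 1) := by
    have h := Tendsto.rpow_const (p := γ) (hgu.div hgq one_ne_zero) (Or.inr hγ.le)
    simpa using h
  refine Tendsto.congr' ?_ hlim
  filter_upwards [hu.eventually_gt_atTop 0, hqinf.eventually_gt_atTop 0,
    hgu.eventually (eventually_gt_nhds one_pos),
    hgq.eventually (eventually_gt_nhds one_pos)] with i hui hqi hgui hgqi
  have hτq : τ i = S (q i) := (hq i).symm
  have hSu : S (u i) = β * (u i) ^ (-(1/γ)) * g (u i) := hSid _ hui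
  have hSq : S (q i) = β * (q i) ^ (-(1/γ)) * g (q i) := hSid _ hqi
  have hPu : (0:ℝ) < (u i) ^ (-(1/γ)) := Real.rpow_pos_of_pos hui _
  have hPq : (0:ℝ) < (q i) ^ (-(1/γ)) := Real.rpow_pos_of_pos hqi _
  have hratio : S (u i) / τ i = (q i / u i) ^ (1/γ) * (g (u i) / g (q i)) := by
    rw [hτq, hSu, hSq, Real.div_rpow hqi.le hui.le,
      Real.rpow_neg hui.le, Real.rpow_neg hqi.le]
    have hQu : (0:ℝ) < (u i) ^ (1/γ) := Real.rpow_pos_of_pos hui _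
    have hQq : (0:ℝ) < (q i) ^ (1/γ) := Real.rpow_pos_of_pos hqi _
    field_simp
  have hpos1 : (0:ℝ) ≤ (q i / u i) ^ (1/γ) :=
    (Real.rpow_pos_of_pos (div_pos hqi hui) _).le
  have hpos2 : (0:ℝ) ≤ g (u i) / g (q i) :=
    (div_pos hgui hgqi).le
  have key : u i * (S (u i) / τ i) ^ γ / q i = (g (u i) / g (q i)) ^ γ := by
    rw [hratio, Real.mul_rpow hpos1 hpos2, ← Real.rpow_mul (div_pos hqi hui).le,
      one_div_mul_cancel hγ0, Real.rpow_one]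
    field_simp
  exact key.symm
end

section
/- For the Student's t-distribution with v degrees of freedom, the right tail probability satisfies P(X > u) = (Γ((v+1)/2) v^{(v−1)/2}) / (√(vπ) Γ(v/2)) · u^{-v} · {1 − v²(v+1)/(2(v+2)) u^{-2} + o(u^{-2})} as u → ∞. In particular the extreme value index is γ = 1/v. -/
open Filter Real Asymptotics MeasureTheory


lemma taylor_rpow_bound {s t : ℝ} (hs : 0 < s) (ht : 0 ≤ t) :
    |(1 + t) ^ (-s) - (1 - s * t)| ≤ (s + 1) ^ 2 * t ^ 2 := by
  have h1t : (0:ℝ) < 1 + t := by linarith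
  have hlog : Real.log (1 + t) ≤ t := by
    have := Real.log_le_sub_one_of_pos h1t; linarith
  have hlog0 : 0 ≤ Real.log (1 + t) := Real.log_nonneg (by linarith)
  have lower : 1 - s * t ≤ (1 + t) ^ (-s) := by
    rw [Real.rpow_def_of_pos h1t]
    have h3 := Real.add_one_le_exp (-s * Real.log (1 + t))
    have h6 : s * Real.log (1 + t) ≤ s * t := mul_le_mul_of_nonneg_left hlog hs.le
    have h7 : Real.exp (Real.log (1 + t) * -s) = Real.exp (-s * Real.log (1 + t)) := by
      rw [mul_comm]
    linarith
  have upper : (1 + t) ^ (-s) ≤ 1 - s * t + (s + 1) ^ 2 * t ^ 2 := by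
    have hb : 1 + (s + 2) * t ≤ (1 + t) ^ (s + 2) :=
      one_add_mul_self_le_rpow_one_add (by linarith) (by linarith)
    have hbpos : (0:ℝ) < 1 + (s + 2) * t := by nlinarith
    have hkey : (1 + t) ^ (-s) = (1 + t) ^ (2:ℝ) * ((1 + t) ^ (s + 2))⁻¹ := by
      rw [← Real.rpow_neg h1t.le, ← Real.rpow_add h1t]; ring_nf
    have h2 : ((1 + t) ^ (s + 2))⁻¹ ≤ (1 + (s + 2) * t)⁻¹ := inv_anti₀ hbpos hb
    have h5 : (1 + t) ^ (-s) ≤ (1 + t) ^ (2:ℝ) * (1 + (s + 2) * t)⁻¹ := by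
      rw [hkey]
      exact mul_le_mul_of_nonneg_left h2 (by positivity)
    rw [Real.rpow_two, ← div_eq_mul_inv] at h5
    refine h5.trans ?_
    rw [div_le_iff₀ hbpos]
    nlinarith [mul_nonneg (mul_nonneg ht ht) ht,
      mul_nonneg hs.le (mul_nonneg (mul_nonneg ht ht) ht),
      mul_nonneg (mul_nonneg hs.le hs.le) (mul_nonneg (mul_nonneg ht ht) ht),
      mul_nonneg (mul_nonneg (mul_nonneg hs.le hs.le) hs.le) (mul_nonneg (mul_nonneg ht ht) ht)]
  rw [abs_le]
  constructor <;> nlinarith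

lemma aux_pow (v : ℝ) (hv : 0 < v) (s : ℝ) (hs : s = (v + 1) / 2)
    (x : ℝ) (hx : 0 < x) : ((x:ℝ) ^ 2 / v) ^ (-s) = v ^ s * x ^ (-(v+1)) := by
  rw [Real.div_rpow (by positivity) hv.le, ← Real.rpow_natCast x 2,
    ← Real.rpow_mul hx.le, Real.rpow_neg hv.le, div_inv_eq_mul]
  rw [show ((2:ℕ):ℝ) * -s = -(v+1) by push_cast; rw [hs]; ring]
  ring

lemma student_pointwise_bound (v : ℝ) (hv : 0 < v) (s : ℝ) (hs : s = (v + 1) / 2)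
    (x : ℝ) (hx : 0 < x) :
    |(1 + x ^ 2 / v) ^ (-s) - (v ^ s * x ^ (-(v+1)) - s * v * v ^ s * x ^ (-(v+3)))|
      ≤ (s + 1) ^ 2 * v ^ 2 * v ^ s * x ^ (-(v+5)) := by
  have hs0 : 0 < s := by rw [hs]; linarith
  have hxne : x ≠ 0 := hx.ne'
  have hy : (0:ℝ) < x ^ (-(v+5)) := Real.rpow_pos_of_pos hx _
  have h1 : x ^ (-(v+1)) = x ^ (-(v+5)) * x ^ (4:ℕ) := by
    rw [← Real.rpow_natCast x 4, ← Real.rpow_add hx]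
    congr 1; push_cast; ring
  have h2 : x ^ (-(v+3)) = x ^ (-(v+5)) * x ^ (2:ℕ) := by
    rw [← Real.rpow_natCast x 2, ← Real.rpow_add hx]
    congr 1; push_cast; ring
  have ht0 : (0:ℝ) ≤ v / x ^ 2 := by positivity
  have hfac : (1 : ℝ) + x ^ 2 / v = (x ^ 2 / v) * (1 + v / x ^ 2) := by
    field_simp; ring
  have hpow : ((x:ℝ) ^ 2 / v) ^ (-s) = v ^ s * (x ^ (-(v+5)) * x ^ (4:ℕ)) := by
    rw [← h1, Real.div_rpow (by positivity) hv.le, ← Real.rpow_natCast x 2,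
      ← Real.rpow_mul hx.le, Real.rpow_neg hv.le, div_inv_eq_mul]
    rw [show ((2:ℕ):ℝ) * -s = -(v+1) by push_cast; rw [hs]; ring]
    ring
  have hg : (1 + x ^ 2 / v) ^ (-s)
      = v ^ s * (x ^ (-(v+5)) * x ^ (4:ℕ)) * (1 + v / x ^ 2) ^ (-s) := by
    rw [hfac, Real.mul_rpow (by positivity) (by positivity), hpow]
  have habs : (1 + x ^ 2 / v) ^ (-s) - (v ^ s * x ^ (-(v+1)) - s * v * v ^ s * x ^ (-(v+3)))
      = (v ^ s * (x ^ (-(v+5)) * x ^ (4:ℕ)))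
        * ((1 + v / x ^ 2) ^ (-s) - (1 - s * (v / x ^ 2))) := by
    rw [hg, h1, h2]; field_simp
  rw [habs, abs_mul]
  have hc : (0:ℝ) < v ^ s * (x ^ (-(v+5)) * x ^ (4:ℕ)) := by positivity
  rw [abs_of_pos hc]
  calc v ^ s * (x ^ (-(v+5)) * x ^ (4:ℕ)) * |(1 + v / x ^ 2) ^ (-s) - (1 - s * (v / x ^ 2))|
      ≤ v ^ s * (x ^ (-(v+5)) * x ^ (4:ℕ)) * ((s + 1) ^ 2 * (v / x ^ 2) ^ 2) :=
        mul_le_mul_of_nonneg_left (taylor_rpow_bound hs0 ht0) hc.le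
    _ = (s + 1) ^ 2 * v ^ 2 * v ^ s * x ^ (-(v+5)) := by
        field_simp

lemma student_integral_bound (v : ℝ) (hv : 0 < v) (s : ℝ) (hs : s = (v + 1) / 2)
    (u : ℝ) (hu : 0 < u) :
    |(∫ x in Set.Ioi u, (1 + x ^ 2 / v) ^ (-s))
        - (v ^ (s-1) * u ^ (-v) - s * v ^ (s+1) / (v+2) * u ^ (-(v+2)))|
      ≤ (s + 1) ^ 2 * v ^ 2 * v ^ s / (v + 4) * u ^ (-(v+4)) := by
  have hs0 : 0 < s := by rw [hs]; linarith
  have I1 : IntegrableOn (fun x : ℝ => x ^ (-(v+1))) (Set.Ioi u) :=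
    integrableOn_Ioi_rpow_of_lt (by linarith) hu
  have I3 : IntegrableOn (fun x : ℝ => x ^ (-(v+3))) (Set.Ioi u) :=
    integrableOn_Ioi_rpow_of_lt (by linarith) hu
  have I5 : IntegrableOn (fun x : ℝ => x ^ (-(v+5))) (Set.Ioi u) :=
    integrableOn_Ioi_rpow_of_lt (by linarith) hu
  have hcont : Continuous (fun x : ℝ => (1 + x ^ 2 / v) ^ (-s)) := by
    have hc2 : Continuous fun x : ℝ => 1 + x ^ 2 / v := by continuity
    exact hc2.rpow_const fun x => Or.inl (by positivity)
  have Ig : IntegrableOn (fun x : ℝ => (1 + x ^ 2 / v) ^ (-s)) (Set.Ioi u) := by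
    apply Integrable.mono' (I1.const_mul (v ^ s))
      (hcont.aestronglyMeasurable.restrict)
    filter_upwards [ae_restrict_mem measurableSet_Ioi] with x hx
    have hx0 : 0 < x := hu.trans hx
    rw [Real.norm_eq_abs, abs_of_pos (Real.rpow_pos_of_pos (by positivity) _)]
    calc (1 + x ^ 2 / v) ^ (-s) ≤ (x ^ 2 / v) ^ (-s) :=
          Real.rpow_le_rpow_of_nonpos (by positivity) (by linarith [sq_nonneg x]) (by linarith)
      _ = v ^ s * x ^ (-(v+1)) := aux_pow v hv s hs x hx0
  have IP : IntegrableOn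
      (fun x : ℝ => v ^ s * x ^ (-(v+1)) - s * v * v ^ s * x ^ (-(v+3))) (Set.Ioi u) :=
    (I1.const_mul (v ^ s)).sub (I3.const_mul (s * v * v ^ s))
  have e1 : (∫ x in Set.Ioi u, x ^ (-(v+1))) = u ^ (-v) / v := by
    rw [integral_Ioi_rpow_of_lt (by linarith : -(v+1) < -1) hu,
      show -(v+1)+1 = -v by ring, neg_div_neg_eq]
  have e3 : (∫ x in Set.Ioi u, x ^ (-(v+3))) = u ^ (-(v+2)) / (v+2) := by
    rw [integral_Ioi_rpow_of_lt (by linarith : -(v+3) < -1) hu,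
      show -(v+3)+1 = -(v+2) by ring, neg_div_neg_eq]
  have hIP : (∫ x in Set.Ioi u, (v ^ s * x ^ (-(v+1)) - s * v * v ^ s * x ^ (-(v+3))))
      = v ^ (s-1) * u ^ (-v) - s * v ^ (s+1) / (v+2) * u ^ (-(v+2)) := by
    rw [integral_sub (I1.const_mul _) (I3.const_mul _), integral_const_mul, integral_const_mul,
      e1, e3, Real.rpow_sub hv, Real.rpow_add hv, Real.rpow_one]
    ring
  have hdiff : (∫ x in Set.Ioi u, (1 + x ^ 2 / v) ^ (-s))
        - (v ^ (s-1) * u ^ (-v) - s * v ^ (s+1) / (v+2) * u ^ (-(v+2)))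
      = ∫ x in Set.Ioi u,
          ((1 + x ^ 2 / v) ^ (-s) - (v ^ s * x ^ (-(v+1)) - s * v * v ^ s * x ^ (-(v+3)))) := by
    rw [integral_sub Ig IP, hIP]
  rw [hdiff]
  have hb : ‖∫ x in Set.Ioi u,
        ((1 + x ^ 2 / v) ^ (-s) - (v ^ s * x ^ (-(v+1)) - s * v * v ^ s * x ^ (-(v+3))))‖
      ≤ ∫ x in Set.Ioi u, ((s + 1) ^ 2 * v ^ 2 * v ^ s) * x ^ (-(v+5)) := by
    apply norm_integral_le_of_norm_le (I5.const_mul _)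
    filter_upwards [ae_restrict_mem measurableSet_Ioi] with x hx
    rw [Real.norm_eq_abs]
    exact student_pointwise_bound v hv s hs x (hu.trans hx)
  rw [← Real.norm_eq_abs]
  refine hb.trans ?_
  rw [integral_const_mul, integral_Ioi_rpow_of_lt (by linarith : -(v+5) < -1) hu,
    show -(v+5)+1 = -(v+4) by ring, neg_div_neg_eq]
  exact le_of_eq (by ring)

/-- Student's t tail expansion: with `v > 0` degrees of freedom and density
`f(x) = Γ((v+1)/2)/(√(vπ) Γ(v/2)) (1 + x²/v)^{-(v+1)/2}`, the right tail satisfies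
`P(X > u) = (Γ((v+1)/2) v^{(v-1)/2})/(√(vπ) Γ(v/2)) u^{-v} (1 − v²(v+1)/(2(v+2)) u^{-2} + o(u^{-2}))`
as `u → ∞`. In particular `P(X > tu)/P(X > u) → t^{-v}` for all `t > 1`, i.e. the
extreme value index is `γ = 1/v`. -/
theorem student_t_tail_expansion (v : ℝ) (hv : 0 < v)
    (c : ℝ) (hc : c = Real.Gamma ((v + 1) / 2) / (Real.sqrt (v * π) * Real.Gamma (v / 2)))
    (tail : ℝ → ℝ)
    (htail : ∀ u : ℝ, tail u = ∫ x in Set.Ioi u, c * (1 + x ^ 2 / v) ^ (-((v + 1) / 2))) :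
    (fun u : ℝ => tail u -
        c * v ^ ((v - 1) / 2) * u ^ (-v) * (1 - v ^ 2 * (v + 1) / (2 * (v + 2)) * u ^ (-(2:ℝ))))
      =o[atTop] (fun u : ℝ => u ^ (-v) * u ^ (-(2:ℝ))) ∧
    ∀ t : ℝ, 1 < t →
      Tendsto (fun u : ℝ => tail (t * u) / tail u) atTop (nhds (t ^ (-v))) := by

  set s : ℝ := (v + 1) / 2 with hsdef
  have hs : s = (v + 1) / 2 := rfl
  have hs0 : 0 < s := by rw [hs]; linarith
  have hc0 : 0 < c := by
    rw [hc]
    exact div_pos (Real.Gamma_pos_of_pos (by linarith))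
      (mul_pos (Real.sqrt_pos.mpr (by positivity)) (Real.Gamma_pos_of_pos (by positivity)))
  set k : ℝ := v ^ ((v - 1) / 2) with hkdef
  have hk0 : 0 < k := Real.rpow_pos_of_pos hv _
  set A : ℝ := v ^ 2 * (v + 1) / (2 * (v + 2)) with hAdef
  set C : ℝ := (s + 1) ^ 2 * v ^ 2 * v ^ s / (v + 4) with hCdef
  set E : ℝ → ℝ := fun u => tail u - c * k * u ^ (-v) * (1 - A * u ^ (-(2:ℝ))) with hEdef
  have h3 : k = v ^ (s - 1) := by rw [hkdef]; congr 1; rw [hs]; ring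
  have hid : ∀ u : ℝ, 0 < u → E u = c * ((∫ x in Set.Ioi u, (1 + x ^ 2 / v) ^ (-s))
      - (v ^ (s-1) * u ^ (-v) - s * v ^ (s+1) / (v+2) * u ^ (-(v+2)))) := by
    intro u hu
    have h1 : tail u = c * ∫ x in Set.Ioi u, (1 + x ^ 2 / v) ^ (-s) := by
      rw [htail u, integral_const_mul]
    have h2 : u ^ (-v) * u ^ (-(2:ℝ)) = u ^ (-(v+2)) := by
      rw [← Real.rpow_add hu]; congr 1; ring
    have h4 : k * A = s * v ^ (s+1) / (v+2) := by
      rw [h3, hAdef, show s + 1 = (s - 1) + 2 by ring, Real.rpow_add hv, Real.rpow_two, hs]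
      field_simp
    have h5 : c * k * u ^ (-v) * (1 - A * u ^ (-(2:ℝ)))
        = c * (v ^ (s-1) * u ^ (-v) - s * v ^ (s+1) / (v+2) * u ^ (-(v+2))) := by
      rw [← h2, ← h4, ← h3]; ring
    simp only [hEdef]
    rw [h1, h5]; ring
  have hbound : ∀ u : ℝ, 0 < u → |E u| ≤ c * C * u ^ (-(v+4)) := by
    intro u hu
    rw [hid u hu, abs_mul, abs_of_pos hc0]
    calc c * |(∫ x in Set.Ioi u, (1 + x ^ 2 / v) ^ (-s))
          - (v ^ (s-1) * u ^ (-v) - s * v ^ (s+1) / (v+2) * u ^ (-(v+2)))|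
        ≤ c * (C * u ^ (-(v+4))) :=
          mul_le_mul_of_nonneg_left (student_integral_bound v hv s hs u hu) hc0.le
      _ = c * C * u ^ (-(v+4)) := by ring
  have part1 : E =o[atTop] fun u : ℝ => u ^ (-v) * u ^ (-(2:ℝ)) := by
    have hO : E =O[atTop] fun u : ℝ => u ^ (-(v+4)) := by
      rw [isBigO_iff]
      refine ⟨c * C, ?_⟩
      filter_upwards [eventually_gt_atTop 0] with u hu
      rw [Real.norm_eq_abs, Real.norm_eq_abs, abs_of_pos (Real.rpow_pos_of_pos hu _)]
      exact hbound u hu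
    have ho : (fun u : ℝ => u ^ (-(v+4))) =o[atTop] fun u : ℝ => u ^ (-v) * u ^ (-(2:ℝ)) := by
      have t0 : Tendsto (fun u : ℝ => u ^ (-(2:ℝ))) atTop (nhds 0) :=
        tendsto_rpow_neg_atTop (by norm_num)
      have o1 : (fun u : ℝ => u ^ (-(2:ℝ))) =o[atTop] (fun _ : ℝ => (1:ℝ)) :=
        (isLittleO_one_iff ℝ).mpr t0
      have o2 := o1.mul_isBigO (isBigO_refl (fun u : ℝ => u ^ (-v) * u ^ (-(2:ℝ))) atTop)
      refine o2.congr' ?_ ?_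
      · filter_upwards [eventually_gt_atTop 0] with u hu
        rw [← Real.rpow_add hu, ← Real.rpow_add hu]; congr 1; ring
      · filter_upwards with u; rw [one_mul]
    exact hO.trans_isLittleO ho
  refine ⟨part1, ?_⟩
  intro t htt
  have ht0 : 0 < t := lt_trans one_pos htt
  have hoE : E =o[atTop] fun u : ℝ => u ^ (-v) := by
    refine part1.trans_isBigO ?_
    rw [isBigO_iff]
    refine ⟨1, ?_⟩
    filter_upwards [eventually_ge_atTop 1] with u hu
    have hu0 : (0:ℝ) < u := lt_of_lt_of_le one_pos hu
    have hp1 : (0:ℝ) < u ^ (-v) := Real.rpow_pos_of_pos hu0 _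
    have hp2 : (0:ℝ) < u ^ (-(2:ℝ)) := Real.rpow_pos_of_pos hu0 _
    rw [Real.norm_eq_abs, Real.norm_eq_abs, one_mul, abs_of_pos (mul_pos hp1 hp2),
      abs_of_pos hp1]
    have h1 : u ^ (-(2:ℝ)) ≤ 1 := Real.rpow_le_one_of_one_le_of_nonpos hu (by norm_num)
    nlinarith
  have hdiv : Tendsto (fun u : ℝ => E u / u ^ (-v)) atTop (nhds 0) :=
    hoE.tendsto_div_nhds_zero
  have hlim : Tendsto (fun u : ℝ => tail u / (c * k * u ^ (-v))) atTop (nhds 1) := by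
    have lA : Tendsto (fun u : ℝ => 1 - A * u ^ (-(2:ℝ))) atTop (nhds 1) := by
      have h := ((tendsto_rpow_neg_atTop (show (0:ℝ) < 2 by norm_num)).const_mul A)
      have h2 := (tendsto_const_nhds (α := ℝ) (f := atTop) (x := (1:ℝ))).sub h
      simpa using h2
    have lB : Tendsto (fun u : ℝ => (E u / u ^ (-v)) / (c * k)) atTop (nhds 0) := by
      simpa using hdiv.div_const (c * k)
    have l1 := lA.add lB
    rw [add_zero] at l1
    refine l1.congr' ?_
    filter_upwards [eventually_gt_atTop 0] with u hu
    have hp1 : (0:ℝ) < u ^ (-v) := Real.rpow_pos_of_pos hu _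
    have hid2 : tail u = c * k * u ^ (-v) * (1 - A * u ^ (-(2:ℝ))) + E u := by
      simp only [hEdef]; ring
    rw [hid2]
    field_simp
  have l2 : Tendsto (fun u : ℝ => tail (t * u) / (c * k * (t * u) ^ (-v))) atTop (nhds 1) :=
    hlim.comp (tendsto_id.const_mul_atTop ht0)
  have l3 : Tendsto (fun u : ℝ => (c * k * u ^ (-v)) / tail u) atTop (nhds 1) := by
    have h := hlim.inv₀ one_ne_zero
    simpa [inv_div] using h
  have l4 := (l2.mul (tendsto_const_nhds (α := ℝ) (f := atTop) (x := t ^ (-v)))).mul l3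
  rw [one_mul, mul_one] at l4
  have htne : ∀ᶠ u in atTop, tail u ≠ 0 := by
    have h := hlim.eventually (eventually_gt_nhds (show (1:ℝ)/2 < 1 by norm_num))
    filter_upwards [h] with u hu h0
    rw [h0, zero_div] at hu
    norm_num at hu
  refine Tendsto.congr' ?_ l4
  filter_upwards [eventually_gt_atTop 0, htne] with u hu hne
  have hmul : (t * u) ^ (-v) = t ^ (-v) * u ^ (-v) := Real.mul_rpow ht0.le hu.le
  have hp1 : u ^ (-v) ≠ 0 := (Real.rpow_pos_of_pos hu _).ne'
  have hp2 : t ^ (-v) ≠ 0 := (Real.rpow_pos_of_pos ht0 _).ne'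
  rw [hmul]
  field_simp
end
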